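/- arXiv:2201.00215 — 3 statements merged into one kernel-verified Lean document; each statement's English description precedes it below -/
import Mathlib

section
/- For every prime p ≥ 5, every positive integer ℓ, every integer r with 0 < r < p such that 24r+1 is a quadratic nonresidue modulo p, and every n ≥ 0, the generalized Frobenius partition function φ_{pℓ-1} satisfies φ_{pℓ-1}(pn+r) ≡ 0 (mod 2). -/
set_option linter.unusedSectionVars false
open Finset

/-- Andrews' generalized Frobenius partition function `φ_k(n)`: the number of
two-rowed arrays `(a_1,…,a_s; b_1,…,b_s)` of nonnegative integers, each row
non-increasing with each entry repeated at most `k` times per row, and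
`n = s + Σ a_i + Σ b_i`. -/
noncomputable def genFrobPhi (k n : ℕ) : ℕ :=
  Set.ncard {x : Σ s : ℕ, (Fin s → ℕ) × (Fin s → ℕ) |
    (∀ i j : Fin x.1, i ≤ j → x.2.1 j ≤ x.2.1 i) ∧
    (∀ i j : Fin x.1, i ≤ j → x.2.2 j ≤ x.2.2 i) ∧
    (∀ v : ℕ, (Finset.univ.filter fun i => x.2.1 i = v).card ≤ k) ∧
    (∀ v : ℕ, (Finset.univ.filter fun i => x.2.2 i = v).card ≤ k) ∧
    n = x.1 + (∑ i, x.2.1 i) + (∑ i, x.2.2 i)}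

namespace PhiParity


lemma even_card_aux {β : Type*} [DecidableEq β] (f : β → β) (hf : ∀ x, f (f x) = x) :
    ∀ (n : ℕ) (t : Finset β), t.card = n → (∀ x ∈ t, f x ∈ t ∧ f x ≠ x) → 2 ∣ t.card := by
  intro n
  induction n using Nat.strong_induction_on with
  | _ n ih =>
    intro t hcard hprop
    rcases t.eq_empty_or_nonempty with rfl | ⟨x, hx⟩
    · simp
    · obtain ⟨hfx, hne⟩ := hprop x hx
      set t' := (t.erase x).erase (f x) with ht'
      have hfx' : f x ∈ t.erase x := Finset.mem_erase.2 ⟨hne, hfx⟩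
      have hc1 : (t.erase x).card = t.card - 1 := Finset.card_erase_of_mem hx
      have hc2 : t'.card = (t.erase x).card - 1 := Finset.card_erase_of_mem hfx'
      have h2le : 2 ≤ t.card := by
        have := Finset.one_lt_card.2 ⟨x, hx, f x, hfx, fun h => hne h.symm⟩
        omega
      have hprop' : ∀ y ∈ t', f y ∈ t' ∧ f y ≠ y := by
        intro y hy
        have hyt : y ∈ t := Finset.mem_of_mem_erase (Finset.mem_of_mem_erase hy)
        have hynex : y ≠ f x := (Finset.mem_erase.1 hy).1
        have hynx : y ≠ x := (Finset.mem_erase.1 (Finset.mem_of_mem_erase hy)).1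
        obtain ⟨hfy, hfyne⟩ := hprop y hyt
        refine ⟨Finset.mem_erase.2 ⟨?_, Finset.mem_erase.2 ⟨?_, hfy⟩⟩, hfyne⟩
        · intro h; apply hynx; rw [← hf y, h, hf]
        · intro h; apply hynex; rw [← hf y, h]
      have := ih (t.card - 2) (by omega) t' (by omega) hprop'
      have : 2 ∣ t'.card := this
      omega

lemma card_modEq_card_fixed {β : Type*} [Finite β] (f : β → β) (hf : ∀ x, f (f x) = x) :
    Nat.card β ≡ Nat.card {x : β // f x = x} [MOD 2] := by
  classical
  have : Fintype β := Fintype.ofFinite β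
  rw [Nat.card_eq_fintype_card, Nat.card_eq_fintype_card, Fintype.card_subtype]
  have hsplit : (Finset.univ : Finset β).card =
      (Finset.univ.filter fun x => f x = x).card + (Finset.univ.filter fun x => ¬ f x = x).card := by
    rw [Finset.card_filter_add_card_filter_not]
  have heven : 2 ∣ (Finset.univ.filter fun x => ¬ f x = x).card := by
    apply even_card_aux f hf _ _ rfl
    intro x hx
    simp only [Finset.mem_filter, Finset.mem_univ, true_and] at hx ⊢
    exact ⟨by rw [hf]; exact fun h => hx h.symm, hx⟩
  rw [Fintype.card, hsplit]
  obtain ⟨c, hc⟩ := heven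
  rw [hc]
  show _ % 2 = _ % 2
  omega

lemma even_card_of_no_fixed {β : Type*} [Finite β] (f : β → β) (hf : ∀ x, f (f x) = x)
    (hnf : ∀ x, f x ≠ x) : 2 ∣ Nat.card β := by
  have h := card_modEq_card_fixed f hf
  have : IsEmpty {x : β // f x = x} := ⟨fun x => hnf x.1 x.2⟩
  have h0 : Nat.card {x : β // f x = x} = 0 := Nat.card_of_isEmpty
  rw [h0] at h
  exact (Nat.modEq_zero_iff_dvd).1 h


lemma mem_distincts' {e : ℕ} (P : e.Partition) :
    P ∈ Nat.Partition.distincts e ↔ P.parts.Nodup := by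
  unfold Nat.Partition.distincts
  rw [Finset.mem_filter]
  simp

lemma gauss_sum (u w : ℕ) : 2 * ((Icc u (u + w)).sum id) = (w + 1) * (2 * u + w) := by
  have h1 : Icc u (u + w) = Ico u (u + w + 1) := by rw [Finset.Ico_add_one_right_eq_Icc]
  rw [h1, Finset.sum_Ico_eq_sum_range]
  have h2 : u + w + 1 - u = w + 1 := by omega
  rw [h2]
  simp only [id_eq]
  rw [Finset.sum_add_distrib, Finset.sum_const, smul_eq_mul, card_range]
  have h3 := Finset.sum_range_id_mul_two (w + 1)
  have h4 : w + 1 - 1 = w := by omega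
  rw [h4] at h3
  nlinarith [h3]

/-- length of the maximal run `a, a-1, ..., a-t+1` contained in `S`. -/
noncomputable def runLen (S : Finset ℕ) (a : ℕ) : ℕ :=
  Nat.findGreatest (fun t => Icc (a + 1 - t) a ⊆ S) a

/-- Franklin's involution move on the set of parts of a distinct partition. -/
noncomputable def franklinMove (S : Finset ℕ) : Finset ℕ :=
  if h : S.Nonempty then
    if S.min' h ≤ runLen S (S.max' h) then
      insert (S.max' h + 1) ((S.erase (S.min' h)).erase (S.max' h + 1 - S.min' h))
    else
      insert (runLen S (S.max' h))
        (insert (S.max' h - runLen S (S.max' h)) (S.erase (S.max' h)))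
  else S

section

variable {S : Finset ℕ} {a s σ : ℕ} (hne : S.Nonempty) (hpos : ∀ x ∈ S, 0 < x)
  (ha : a = S.max' hne) (hs : s = S.min' hne) (hσ : σ = runLen S a)

include hne hpos ha hσ

lemma run_subset : Icc (a + 1 - σ) a ⊆ S := by
  subst ha; subst hσ
  unfold runLen
  have hmax : 1 ≤ S.max' hne := hpos _ (S.max'_mem hne)
  have hP1 : Icc (S.max' hne + 1 - 1) (S.max' hne) ⊆ S := by
    intro x hx
    rw [mem_Icc] at hx
    have : x = S.max' hne := by omega
    rw [this]; exact S.max'_mem hne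
  exact Nat.findGreatest_spec
    (P := fun t => Icc (S.max' hne + 1 - t) (S.max' hne) ⊆ S) hmax hP1

lemma run_pos : 1 ≤ σ := by
  subst ha; subst hσ
  unfold runLen
  have hmax : 1 ≤ S.max' hne := hpos _ (S.max'_mem hne)
  have hP1 : Icc (S.max' hne + 1 - 1) (S.max' hne) ⊆ S := by
    intro x hx
    rw [mem_Icc] at hx
    have : x = S.max' hne := by omega
    rw [this]; exact S.max'_mem hne
  exact Nat.le_findGreatest
    (P := fun t => Icc (S.max' hne + 1 - t) (S.max' hne) ⊆ S) hmax hP1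

lemma run_le : σ ≤ a := by
  subst ha; subst hσ; exact Nat.findGreatest_le _

lemma run_out (hlt : σ < a) : a - σ ∉ S := by
  intro hmem
  have hsub : Icc (a + 1 - (σ + 1)) a ⊆ S := by
    intro x hx
    rw [mem_Icc] at hx
    by_cases hx2 : x = a - σ
    · rw [hx2]; exact hmem
    · exact run_subset hne hpos ha hσ (mem_Icc.2 ⟨by omega, hx.2⟩)
  have h2 : σ + 1 ≤ runLen S a := by
    subst hσ; subst ha
    exact Nat.le_findGreatest
      (P := fun t => Icc (S.max' hne + 1 - t) (S.max' hne) ⊆ S) (by omega) hsub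
  omega

include hs in
lemma run_le' : σ ≤ a + 1 - s := by
  have h1 : 1 ≤ σ := run_pos hne hpos ha hσ
  have h2 : σ ≤ a := run_le hne hpos ha hσ
  have hmem : a + 1 - σ ∈ S := run_subset hne hpos ha hσ (mem_Icc.2 ⟨le_refl _, by omega⟩)
  have h3 := S.min'_le _ hmem
  rw [← hs] at h3
  omega

include hs in
/-- Case A of Franklin's move. -/
lemma moveA_spec (hcase : s ≤ σ) (hgood : 2 * s ≤ a) :
    ∃ hT : (franklinMove S).Nonempty,
      (∀ x ∈ franklinMove S, 0 < x) ∧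
      (franklinMove S).sum id = S.sum id ∧
      franklinMove S ≠ S ∧
      ¬((franklinMove S).min' hT ≤ runLen (franklinMove S) ((franklinMove S).max' hT)) ∧
      insert (runLen (franklinMove S) ((franklinMove S).max' hT))
        (insert ((franklinMove S).max' hT - runLen (franklinMove S) ((franklinMove S).max' hT))
          ((franklinMove S).erase ((franklinMove S).max' hT))) = S := by
  have hsS : s ∈ S := hs ▸ S.min'_mem hne
  have haS : a ∈ S := ha ▸ S.max'_mem hne
  have hs1 : 1 ≤ s := hpos _ hsS
  have ha1 : 1 ≤ a := hpos _ haS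
  have hσ1 : 1 ≤ σ := run_pos hne hpos ha hσ
  have hσa : σ ≤ a := run_le hne hpos ha hσ
  have hmin_le : ∀ x ∈ S, s ≤ x := fun x hx => hs ▸ S.min'_le x hx
  have hmax_le : ∀ x ∈ S, x ≤ a := fun x hx => ha ▸ S.le_max' x hx
  have hbS : a + 1 - s ∈ S := by
    apply run_subset hne hpos ha hσ
    rw [mem_Icc]
    constructor <;> omega
  have hsb : s < a + 1 - s := by omega
  have hTeq : franklinMove S = insert (a + 1) ((S.erase s).erase (a + 1 - s)) := by
    rw [franklinMove, dif_pos hne, ← ha, ← hs, ← hσ, if_pos hcase]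
  have haninS : a + 1 ∉ S := fun h => by have := hmax_le _ h; omega
  have hanin : a + 1 ∉ (S.erase s).erase (a + 1 - s) := fun h =>
    haninS (mem_of_mem_erase (mem_of_mem_erase h))
  have hTne : (franklinMove S).Nonempty := by rw [hTeq]; exact insert_nonempty _ _
  -- membership description of T
  have hmemT : ∀ x, x ∈ franklinMove S ↔ (x = a + 1 ∨ (x ∈ S ∧ x ≠ s ∧ x ≠ a + 1 - s)) := by
    intro x
    rw [hTeq, mem_insert, mem_erase, mem_erase]
    tauto
  -- max of T
  have hmaxT : (franklinMove S).max' hTne = a + 1 := by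
    apply le_antisymm
    · apply Finset.max'_le
      intro x hx
      rcases (hmemT x).1 hx with rfl | ⟨hxS, -, -⟩
      · omega
      · have := hmax_le _ hxS; omega
    · exact Finset.le_max' _ _ ((hmemT _).2 (Or.inl rfl))
  -- min of T is > s
  have hminT : s < (franklinMove S).min' hTne := by
    rw [Finset.lt_min'_iff]
    intro y hy
    rcases (hmemT y).1 hy with rfl | ⟨hyS, hys, -⟩
    · omega
    · have := hmin_le _ hyS; omega
  -- run of T equals s
  have hrunT : runLen (franklinMove S) (a + 1) = s := by
    have hge : s ≤ runLen (franklinMove S) (a + 1) := by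
      unfold runLen
      apply Nat.le_findGreatest
        (P := fun t => Icc (a + 1 + 1 - t) (a + 1) ⊆ franklinMove S) (by omega)
      intro x hx
      rw [mem_Icc] at hx
      rw [hmemT]
      by_cases hxa : x = a + 1
      · exact Or.inl hxa
      · right
        refine ⟨?_, by omega, by omega⟩
        apply run_subset hne hpos ha hσ
        rw [mem_Icc]
        constructor <;> omega
    have hle : runLen (franklinMove S) (a + 1) ≤ s := by
      by_contra hc
      push_neg at hc
      have hrle : runLen (franklinMove S) (a + 1) ≤ a + 1 := Nat.findGreatest_le _
      have hspec : Icc (a + 1 + 1 - runLen (franklinMove S) (a + 1)) (a + 1) ⊆ franklinMove S := by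
        unfold runLen
        apply Nat.findGreatest_spec (m := 1)
          (P := fun t => Icc (a + 1 + 1 - t) (a + 1) ⊆ franklinMove S) (by omega)
        intro x hx
        rw [mem_Icc] at hx
        have : x = a + 1 := by omega
        rw [this, hmemT]
        exact Or.inl rfl
      have hmem2 : a + 1 - s ∈ franklinMove S := by
        apply hspec
        rw [mem_Icc]
        constructor <;> omega
      rcases (hmemT _).1 hmem2 with h | ⟨-, -, h⟩
      · omega
      · exact h rfl
    omega
  refine ⟨hTne, ?_, ?_, ?_, ?_, ?_⟩
  · -- positivity
    intro x hx
    rcases (hmemT x).1 hx with rfl | ⟨hxS, -, -⟩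
    · omega
    · exact hpos _ hxS
  · -- sum
    have e1 : ((S.erase s).erase (a + 1 - s)).sum id + id (a + 1 - s) = (S.erase s).sum id :=
      Finset.sum_erase_add _ _ (mem_erase.2 ⟨by omega, hbS⟩)
    have e2 : (S.erase s).sum id + id s = S.sum id := Finset.sum_erase_add _ _ hsS
    have e3 : (franklinMove S).sum id
        = id (a + 1) + ((S.erase s).erase (a + 1 - s)).sum id := by
      rw [hTeq, Finset.sum_insert hanin]
    simp only [id_eq] at e1 e2 e3 ⊢
    omega
  · -- ne
    intro h
    apply haninS
    rw [← h, hmemT]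
    exact Or.inl rfl
  · -- case condition for T
    rw [hmaxT, hrunT]
    omega
  · -- applying the B-formula to T gives back S
    rw [hmaxT, hrunT, hTeq, Finset.erase_insert hanin]
    have h5 : a + 1 - s ∈ S.erase s := mem_erase.2 ⟨by omega, hbS⟩
    rw [Finset.insert_erase h5, Finset.insert_erase hsS]

include hs in
/-- Case B of Franklin's move. -/
lemma moveB_spec (hcase : ¬ s ≤ σ) (hgood : 2 * σ + 1 ≤ a) :
    ∃ hT : (franklinMove S).Nonempty,
      (∀ x ∈ franklinMove S, 0 < x) ∧
      (franklinMove S).sum id = S.sum id ∧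
      franklinMove S ≠ S ∧
      ((franklinMove S).min' hT ≤ runLen (franklinMove S) ((franklinMove S).max' hT)) ∧
      insert ((franklinMove S).max' hT + 1)
        (((franklinMove S).erase ((franklinMove S).min' hT)).erase
          ((franklinMove S).max' hT + 1 - (franklinMove S).min' hT)) = S := by
  have hsS : s ∈ S := hs ▸ S.min'_mem hne
  have haS : a ∈ S := ha ▸ S.max'_mem hne
  have hs1 : 1 ≤ s := hpos _ hsS
  have ha1 : 1 ≤ a := hpos _ haS
  have hσ1 : 1 ≤ σ := run_pos hne hpos ha hσ
  have hσa : σ ≤ a := run_le hne hpos ha hσ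
  have hσs : σ < s := by omega
  have hmin_le : ∀ x ∈ S, s ≤ x := fun x hx => hs ▸ S.min'_le x hx
  have hmax_le : ∀ x ∈ S, x ≤ a := fun x hx => ha ▸ S.le_max' x hx
  have hσlt : σ < a := by omega
  have hbnot : a - σ ∉ S := run_out hne hpos ha hσ hσlt
  have hσnot : σ ∉ S := fun h => by have := hmin_le _ h; omega
  have hTeq : franklinMove S = insert σ (insert (a - σ) (S.erase a)) := by
    rw [franklinMove, dif_pos hne, ← ha, ← hs, ← hσ, if_neg hcase]
  have hTne : (franklinMove S).Nonempty := by rw [hTeq]; exact insert_nonempty _ _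
  have hmemT : ∀ x, x ∈ franklinMove S ↔ (x = σ ∨ x = a - σ ∨ (x ∈ S ∧ x ≠ a)) := by
    intro x
    rw [hTeq, mem_insert, mem_insert, mem_erase]
    tauto
  have hrun_sub : Icc (a + 1 - σ) a ⊆ S := run_subset hne hpos ha hσ
  -- max of T
  have hmaxT : (franklinMove S).max' hTne = a - 1 := by
    apply le_antisymm
    · apply Finset.max'_le
      intro x hx
      rcases (hmemT x).1 hx with rfl | rfl | ⟨hxS, hxa⟩
      · omega
      · omega
      · have := hmax_le _ hxS; omega
    · apply Finset.le_max'
      rw [hmemT]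
      by_cases h1 : σ = 1
      · right; left; omega
      · right; right
        refine ⟨hrun_sub (mem_Icc.2 ⟨by omega, by omega⟩), by omega⟩
  -- min of T
  have hminT : (franklinMove S).min' hTne = σ := by
    apply le_antisymm
    · exact Finset.min'_le _ _ ((hmemT _).2 (Or.inl rfl))
    · apply Finset.le_min'
      intro y hy
      rcases (hmemT y).1 hy with rfl | rfl | ⟨hyS, -⟩
      · omega
      · omega
      · have := hmin_le _ hyS; omega
  -- run of T is at least σ
  have hrunT : σ ≤ runLen (franklinMove S) (a - 1) := by
    unfold runLen
    apply Nat.le_findGreatest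
      (P := fun t => Icc (a - 1 + 1 - t) (a - 1) ⊆ franklinMove S) (by omega)
    intro x hx
    rw [mem_Icc] at hx
    rw [hmemT]
    by_cases hxb : x = a - σ
    · right; left; exact hxb
    · right; right
      refine ⟨hrun_sub (mem_Icc.2 ⟨by omega, by omega⟩), by omega⟩
  refine ⟨hTne, ?_, ?_, ?_, ?_, ?_⟩
  · intro x hx
    rcases (hmemT x).1 hx with rfl | rfl | ⟨hxS, -⟩
    · omega
    · omega
    · exact hpos _ hxS
  · -- sum
    have hnin1 : σ ∉ insert (a - σ) (S.erase a) := by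
      rw [mem_insert, mem_erase]
      push_neg
      exact ⟨by omega, fun _ => hσnot⟩
    have hnin2 : a - σ ∉ S.erase a := fun h => hbnot (mem_of_mem_erase h)
    have e3 : (franklinMove S).sum id = id σ + (insert (a - σ) (S.erase a)).sum id := by
      rw [hTeq, Finset.sum_insert hnin1]
    have e4 : (insert (a - σ) (S.erase a)).sum id = id (a - σ) + (S.erase a).sum id :=
      Finset.sum_insert hnin2
    have e5 : (S.erase a).sum id + id a = S.sum id := Finset.sum_erase_add _ _ haS
    simp only [id_eq] at e3 e4 e5 ⊢
    omega
  · -- ne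
    intro h
    have : a ∈ franklinMove S := by rw [h]; exact haS
    rcases (hmemT a).1 this with h1 | h1 | ⟨-, h1⟩ <;> omega
  · rw [hmaxT, hminT]; exact hrunT
  · -- applying the A-formula to T gives back S
    rw [hmaxT, hminT]
    have h1 : a - 1 + 1 = a := by omega
    rw [h1]
    have hnin1 : σ ∉ insert (a - σ) (S.erase a) := by
      rw [mem_insert, mem_erase]
      push_neg
      exact ⟨by omega, fun _ => hσnot⟩
    have hnin2 : a - σ ∉ S.erase a := fun h => hbnot (mem_of_mem_erase h)
    rw [hTeq, Finset.erase_insert hnin1, Finset.erase_insert hnin2,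
      Finset.insert_erase haS]

include hs in
lemma caseA_good (hcase : s ≤ σ) (hpent : ∀ j : ℕ, 2 * S.sum id + j ≠ 3 * j * j) :
    2 * s ≤ a := by
  by_contra hc
  push_neg at hc
  have hle' : σ ≤ a + 1 - s := run_le' hne hpos ha hs hσ
  have hs1 : 1 ≤ s := hpos _ (hs ▸ S.min'_mem hne)
  have hσ1 : 1 ≤ σ := run_pos hne hpos ha hσ
  have haval : a = 2 * s - 1 := by omega
  have hmin_le : ∀ x ∈ S, s ≤ x := fun x hx => hs ▸ S.min'_le x hx
  have hmax_le : ∀ x ∈ S, x ≤ a := fun x hx => ha ▸ S.le_max' x hx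
  obtain ⟨s', rfl⟩ : ∃ s', s = s' + 1 := ⟨s - 1, by omega⟩
  have hSeq : S = Icc (s' + 1) (s' + 1 + s') := by
    apply Finset.Subset.antisymm
    · intro x hx
      rw [mem_Icc]
      exact ⟨hmin_le _ hx, by have := hmax_le _ hx; omega⟩
    · intro x hx
      apply run_subset hne hpos ha hσ
      rw [mem_Icc] at hx ⊢
      omega
  have hg := gauss_sum (s' + 1) s'
  rw [← hSeq] at hg
  apply hpent (s' + 1)
  ring_nf
  ring_nf at hg
  linarith

include hs in
lemma caseB_good (hcase : ¬ s ≤ σ) (hpent : ∀ j : ℕ, 2 * S.sum id ≠ 3 * j * j + j) :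
    2 * σ + 1 ≤ a := by
  by_contra hc
  push_neg at hc
  have hle' : σ ≤ a + 1 - s := run_le' hne hpos ha hs hσ
  have hs1 : 1 ≤ s := hpos _ (hs ▸ S.min'_mem hne)
  have hσ1 : 1 ≤ σ := run_pos hne hpos ha hσ
  have hσa : σ ≤ a := run_le hne hpos ha hσ
  have hmin_le : ∀ x ∈ S, s ≤ x := fun x hx => hs ▸ S.min'_le x hx
  have hmax_le : ∀ x ∈ S, x ≤ a := fun x hx => ha ▸ S.le_max' x hx
  have haval : a = 2 * σ := by omega
  have hsval : s = σ + 1 := by omega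
  obtain ⟨σ', rfl⟩ : ∃ σ', σ = σ' + 1 := ⟨σ - 1, by omega⟩
  have hSeq : S = Icc (σ' + 2) (σ' + 2 + σ') := by
    apply Finset.Subset.antisymm
    · intro x hx
      rw [mem_Icc]
      refine ⟨by have := hmin_le _ hx; omega, by have := hmax_le _ hx; omega⟩
    · intro x hx
      apply run_subset hne hpos ha hσ
      rw [mem_Icc] at hx ⊢
      omega
  have hg := gauss_sum (σ' + 2) σ'
  rw [← hSeq] at hg
  apply hpent (σ' + 1)
  ring_nf
  ring_nf at hg
  linarith

end

lemma franklinMove_eqB {T : Finset ℕ} (hT : T.Nonempty)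
    (hc : ¬ T.min' hT ≤ runLen T (T.max' hT)) :
    franklinMove T = insert (runLen T (T.max' hT))
      (insert (T.max' hT - runLen T (T.max' hT)) (T.erase (T.max' hT))) := by
  rw [franklinMove, dif_pos hT, if_neg hc]

lemma franklinMove_eqA {T : Finset ℕ} (hT : T.Nonempty)
    (hc : T.min' hT ≤ runLen T (T.max' hT)) :
    franklinMove T = insert (T.max' hT + 1)
      ((T.erase (T.min' hT)).erase (T.max' hT + 1 - T.min' hT)) := by
  rw [franklinMove, dif_pos hT, if_pos hc]

theorem franklinMove_good {S : Finset ℕ} (hne : S.Nonempty) (hpos : ∀ x ∈ S, 0 < x)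
    (h1 : ∀ j : ℕ, 2 * S.sum id ≠ 3 * j * j + j)
    (h2 : ∀ j : ℕ, 2 * S.sum id + j ≠ 3 * j * j) :
    (∀ x ∈ franklinMove S, 0 < x) ∧ (franklinMove S).sum id = S.sum id ∧
      franklinMove S ≠ S ∧ franklinMove (franklinMove S) = S := by
  by_cases hcase : S.min' hne ≤ runLen S (S.max' hne)
  · have hgood := caseA_good hne hpos rfl rfl rfl hcase h2
    obtain ⟨hT, hposT, hsumT, hneT, hcaseT, hback⟩ :=
      moveA_spec hne hpos rfl rfl rfl hcase hgood
    exact ⟨hposT, hsumT, hneT, by rw [franklinMove_eqB hT hcaseT]; exact hback⟩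
  · have hgood := caseB_good hne hpos rfl rfl rfl hcase h1
    obtain ⟨hT, hposT, hsumT, hneT, hcaseT, hback⟩ :=
      moveB_spec hne hpos rfl rfl rfl hcase hgood
    exact ⟨hposT, hsumT, hneT, by rw [franklinMove_eqA hT hcaseT]; exact hback⟩

theorem distincts_card_even (e : ℕ) (h1 : ∀ j : ℕ, 2 * e ≠ 3 * j * j + j)
    (h2 : ∀ j : ℕ, 2 * e + j ≠ 3 * j * j) :
    2 ∣ (Nat.Partition.distincts e).card := by
  classical
  have he : e ≠ 0 := fun h => h2 0 (by omega)
  rw [← Nat.card_eq_finsetCard]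
  have hprop : ∀ x : {P : e.Partition // P ∈ Nat.Partition.distincts e},
      (∀ i ∈ (franklinMove x.1.parts.toFinset).val, 0 < i) ∧
      (franklinMove x.1.parts.toFinset).val.sum = e ∧
      franklinMove x.1.parts.toFinset ≠ x.1.parts.toFinset ∧
      franklinMove (franklinMove x.1.parts.toFinset) = x.1.parts.toFinset := by
    rintro ⟨P, hP⟩
    have hnodup : P.parts.Nodup := (mem_distincts' P).1 hP
    have hval : P.parts.toFinset.val = P.parts := by
      rw [Multiset.toFinset_val, Multiset.dedup_eq_self]
      exact hnodup
    have hsum : P.parts.toFinset.sum id = e := by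
      have : P.parts.toFinset.sum id = (P.parts.toFinset.val.map id).sum := rfl
      rw [this, Multiset.map_id, hval, P.parts_sum]
    have hpos : ∀ x ∈ P.parts.toFinset, 0 < x := by
      intro x hx
      exact P.parts_pos (Multiset.mem_toFinset.1 hx)
    have hne : P.parts.toFinset.Nonempty := by
      rw [Finset.nonempty_iff_ne_empty]
      intro h
      apply he
      rw [← P.parts_sum, ← hval, h]
      rfl
    obtain ⟨hposT, hsumT, hneT, hinv⟩ := franklinMove_good hne hpos
      (by rw [hsum]; exact h1) (by rw [hsum]; exact h2)
    refine ⟨fun i hi => hposT i hi, ?_, hneT, hinv⟩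
    have : (franklinMove P.parts.toFinset).sum id
        = ((franklinMove P.parts.toFinset).val.map id).sum := rfl
    rw [this, Multiset.map_id] at hsumT
    rw [hsumT, hsum]
  set f : {P : e.Partition // P ∈ Nat.Partition.distincts e} →
      {P : e.Partition // P ∈ Nat.Partition.distincts e} := fun x =>
    ⟨⟨(franklinMove x.1.parts.toFinset).val,
      fun {i} hi => (hprop x).1 i hi, (hprop x).2.1⟩,
      (mem_distincts' _).2 (franklinMove x.1.parts.toFinset).nodup⟩ with hf
  have htoF : ∀ x, (f x).1.parts.toFinset = franklinMove x.1.parts.toFinset := by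
    intro x
    rw [hf]
    exact Finset.val_toFinset _
  have hinvol : ∀ x, f (f x) = x := by
    intro x
    have hnodup : x.1.parts.Nodup := (mem_distincts' _).1 x.2
    apply Subtype.ext
    apply Nat.Partition.ext
    show (franklinMove (f x).1.parts.toFinset).val = x.1.parts
    rw [htoF x, (hprop x).2.2.2, Multiset.toFinset_val, Multiset.dedup_eq_self.2 hnodup]
  have hnofix : ∀ x, f x ≠ x := by
    intro x hx
    apply (hprop x).2.2.1
    have : (f x).1.parts.toFinset = x.1.parts.toFinset := by rw [hx]
    rw [htoF x] at this
    exact this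
  exact even_card_of_no_fixed f hinvol hnofix


noncomputable section GF

open PowerSeries
open scoped Classical

variable {α : Type*}

def partialDistinctGF (m : ℕ) [CommSemiring α] :=
  ∏ i ∈ Finset.range m, (1 + (X : PowerSeries α) ^ (i + 1))

/-- A convenience constructor for the power series whose coefficients indicate a subset. -/
def indicatorSeries (α : Type*) [Semiring α] (s : Set ℕ) : PowerSeries α :=
  PowerSeries.mk fun n => if n ∈ s then 1 else 0

theorem coeff_indicator (s : Set ℕ) [Semiring α] (n : ℕ) :
    coeff n (indicatorSeries α s) = if n ∈ s then 1 else 0 :=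
  coeff_mk _ _

theorem coeff_indicator_pos (s : Set ℕ) [Semiring α] (n : ℕ) (h : n ∈ s) :
    coeff n (indicatorSeries α s) = 1 := by rw [coeff_indicator, if_pos h]

theorem coeff_indicator_neg (s : Set ℕ) [Semiring α] (n : ℕ) (h : n ∉ s) :
    coeff n (indicatorSeries α s) = 0 := by rw [coeff_indicator, if_neg h]

theorem constantCoeff_indicator (s : Set ℕ) [Semiring α] :
    constantCoeff (indicatorSeries α s) = if 0 ∈ s then 1 else 0 :=
  rfl

theorem two_series (i : ℕ) [Semiring α] :
    1 + (X : PowerSeries α) ^ i.succ = indicatorSeries α {0, i.succ} := by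
  ext n
  simp only [coeff_indicator, coeff_one, coeff_X_pow, Set.mem_insert_iff, Set.mem_singleton_iff,
    map_add]
  cases' n with d
  · simp [(Nat.succ_ne_zero i).symm]
  · simp [Nat.succ_ne_zero d]

theorem num_series' [Field α] (i : ℕ) :
    (1 - (X : PowerSeries α) ^ (i + 1))⁻¹ = indicatorSeries α {k | i + 1 ∣ k} := by
  rw [PowerSeries.inv_eq_iff_mul_eq_one]
  · ext n
    cases n with
    | zero => simp [mul_sub, zero_pow, constantCoeff_indicator]
    | succ n =>
      simp only [coeff_one, if_false, mul_sub, mul_one, coeff_indicator,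
        LinearMap.map_sub, reduceCtorEq]
      simp_rw [coeff_mul, coeff_X_pow, coeff_indicator, @boole_mul _ _ _ _]
      rw [@sum_ite _ _ _ _ _ (fun _ => Classical.propDecidable _), sum_ite]
      simp_rw [@filter_filter _ _ _ _ _, sum_const_zero, add_zero, sum_const, nsmul_eq_mul, mul_one,
        sub_eq_iff_eq_add, zero_add]
      symm
      split_ifs with h
      · suffices #{a ∈ antidiagonal (n + 1) | i + 1 ∣ a.fst ∧ a.snd = i + 1} = 1 by
          simp only [Set.mem_setOf_eq]; convert congr_arg ((↑) : ℕ → α) this; norm_cast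
        rw [card_eq_one]
        cases' h with p hp
        refine ⟨((i + 1) * (p - 1), i + 1), ?_⟩
        ext ⟨a₁, a₂⟩
        simp only [mem_filter, Prod.mk.injEq, HasAntidiagonal.mem_antidiagonal, mem_singleton]
        constructor
        · rintro ⟨a_left, ⟨a, rfl⟩, rfl⟩
          refine ⟨?_, rfl⟩
          rw [Nat.mul_sub_left_distrib, ← hp, ← a_left, mul_one, Nat.add_sub_cancel]
        · rintro ⟨rfl, rfl⟩
          match p with
          | 0 => rw [mul_zero] at hp; cases hp
          | p + 1 => rw [hp]; simp [mul_add]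
      · suffices #{a ∈ antidiagonal (n + 1) | i + 1 ∣ a.fst ∧ a.snd = i + 1} = 0 by
          simp only [Set.mem_setOf_eq]; convert congr_arg ((↑) : ℕ → α) this; norm_cast
        rw [card_eq_zero]
        apply eq_empty_of_forall_notMem
        simp only [Prod.forall, mem_filter, not_and, HasAntidiagonal.mem_antidiagonal]
        rintro _ h₁ h₂ ⟨a, rfl⟩ rfl
        apply h
        simp [← h₂]
  · simp [zero_pow]


def mkOdd : ℕ ↪ ℕ :=
  ⟨fun i => 2 * i + 1, fun x y h => by linarith⟩

lemma mkOdd_apply (i : ℕ) : mkOdd i = 2 * i + 1 := rfl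


theorem partialGF_prop (α : Type*) [CommSemiring α] (n : ℕ) (s : Finset ℕ) (hs : ∀ i ∈ s, 0 < i)
    (c : ℕ → Set ℕ) (hc : ∀ i, i ∉ s → 0 ∈ c i) :
    #{p : n.Partition | (∀ j, p.parts.count j ∈ c j) ∧ ∀ j ∈ p.parts, j ∈ s} =
      coeff n (∏ i ∈ s, indicatorSeries α ((· * i) '' c i)) := by
  simp_rw [coeff_prod, coeff_indicator, prod_boole, sum_boole]
  apply congr_arg
  simp only [mem_univ, forall_true_left, not_and, not_forall, exists_prop,
    Set.mem_image, not_exists]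
  set φ : (a : Nat.Partition n) →
    a ∈ filter (fun p ↦ (∀ (j : ℕ), Multiset.count j p.parts ∈ c j) ∧ ∀ j ∈ p.parts, j ∈ s) univ →
    ℕ →₀ ℕ := fun p _ => {
      toFun := fun i => Multiset.count i p.parts • i
      support := Finset.filter (fun i => i ≠ 0) p.parts.toFinset
      mem_support_toFun := fun a => by
        simp only [smul_eq_mul, ne_eq, mul_eq_zero, Multiset.count_eq_zero]
        rw [not_or, not_not]
        simp only [Multiset.mem_toFinset, not_not, mem_filter] }
  refine Finset.card_bij φ ?_ ?_ ?_
  · intro a ha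
    simp only [φ, not_forall, not_exists, not_and, exists_prop, mem_filter]
    rw [mem_finsuppAntidiag]
    dsimp only [ne_eq, smul_eq_mul, id_eq, eq_mpr_eq_cast, le_eq_subset, Finsupp.coe_mk]
    simp only [mem_univ, forall_true_left, not_and, not_forall, exists_prop,
      mem_filter, true_and] at ha
    refine ⟨⟨?_, fun i ↦ ?_⟩, fun i _ ↦ ⟨a.parts.count i, ha.1 i, rfl⟩⟩
    · conv_rhs => simp [← a.parts_sum]
      rw [sum_multiset_count_of_subset _ s]
      · simp only [smul_eq_mul]
      · intro i
        simp only [Multiset.mem_toFinset, not_not, mem_filter]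
        apply ha.2
    · simp only [ne_eq, Multiset.mem_toFinset, not_not, mem_filter, and_imp]
      exact fun hi _ ↦ ha.2 i hi
  · intro p₁ hp₁ p₂ hp₂ h
    apply Nat.Partition.ext
    simp only [true_and, mem_univ, mem_filter] at hp₁ hp₂
    ext i
    simp only [φ, ne_eq, Multiset.mem_toFinset, not_not, smul_eq_mul, Finsupp.mk.injEq] at h
    by_cases hi : i = 0
    · rw [hi]
      rw [Multiset.count_eq_zero_of_notMem]
      · rw [Multiset.count_eq_zero_of_notMem]
        intro a; exact Nat.lt_irrefl 0 (hs 0 (hp₂.2 0 a))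
      intro a; exact Nat.lt_irrefl 0 (hs 0 (hp₁.2 0 a))
    · rw [← mul_left_inj' hi]
      rw [funext_iff] at h
      exact h.2 i
  · simp only [φ, mem_filter, mem_finsuppAntidiag, mem_univ, exists_prop, true_and, and_assoc]
    rintro f ⟨hf, hf₃, hf₄⟩
    have hf' : f ∈ finsuppAntidiag s n := mem_finsuppAntidiag.mpr ⟨hf, hf₃⟩
    simp only [mem_finsuppAntidiag] at hf'
    refine ⟨⟨∑ i ∈ s, Multiset.replicate (f i / i) i, ?_, ?_⟩, ?_, ?_, ?_⟩
    · intro i hi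
      simp only [exists_prop, Multiset.mem_sum, mem_map, Function.Embedding.coeFn_mk] at hi
      rcases hi with ⟨t, ht, z⟩
      apply hs
      rwa [Multiset.eq_of_mem_replicate z]
    · simp_rw [Multiset.sum_sum, Multiset.sum_replicate, Nat.nsmul_eq_mul]
      rw [← hf'.1]
      refine sum_congr rfl fun i hi => Nat.div_mul_cancel ?_
      rcases hf₄ i hi with ⟨w, _, hw₂⟩
      rw [← hw₂]
      exact dvd_mul_left _ _
    · intro i
      simp_rw [Multiset.count_sum', Multiset.count_replicate, sum_ite_eq']
      split_ifs with h
      · rcases hf₄ i h with ⟨w, hw₁, hw₂⟩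
        rwa [← hw₂, Nat.mul_div_cancel _ (hs i h)]
      · exact hc _ h
    · intro i hi
      rw [Multiset.mem_sum] at hi
      rcases hi with ⟨j, hj₁, hj₂⟩
      rwa [Multiset.eq_of_mem_replicate hj₂]
    · ext i
      simp_rw [Multiset.count_sum', Multiset.count_replicate, sum_ite_eq']
      simp only [ne_eq, Multiset.mem_toFinset, not_not, smul_eq_mul, ite_mul,
        zero_mul, Finsupp.coe_mk]
      split_ifs with h
      · apply Nat.div_mul_cancel
        rcases hf₄ i h with ⟨w, _, hw₂⟩
        apply Dvd.intro_left _ hw₂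
      · apply symm
        rw [← Finsupp.notMem_support_iff]
        exact notMem_mono hf'.2 h


theorem partialDistinctGF_prop [CommSemiring α] (n m : ℕ) :
    #{p : n.Partition |
        p.parts.Nodup ∧ ∀ j ∈ p.parts, j ∈ (range m).map ⟨Nat.succ, Nat.succ_injective⟩} =
      coeff n (partialDistinctGF (α := α) m) := by
  rw [partialDistinctGF]
  convert partialGF_prop α n
    ((range m).map ⟨Nat.succ, Nat.succ_injective⟩) _ (fun _ => {0, 1}) (fun _ _ => Or.inl rfl)
    using 2
  · congr! with p
    rw [Multiset.nodup_iff_count_le_one]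
    congr! 1 with i
    rcases Multiset.count i p.parts with (_ | _ | ms) <;> simp
  · simp_rw [Finset.prod_map, two_series]
    congr with i
    simp [Set.image_pair]
  · simp only [mem_map, Function.Embedding.coeFn_mk]
    rintro i ⟨_, _, rfl⟩
    apply Nat.succ_pos


theorem distinctGF_prop [CommSemiring α] (n m : ℕ) (h : n < m + 1) :
    #(Nat.Partition.distincts n) = coeff n (partialDistinctGF (α := α) m) := by
  rw [← partialDistinctGF_prop, Nat.Partition.distincts]
  congr with p
  apply (and_iff_left _).symm
  intro i hi
  have : i ≤ n := by
    simpa [p.parts_sum] using Multiset.single_le_sum (fun _ _ => Nat.zero_le _) _ hi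
  simp only [mkOdd, exists_prop, mem_range, Function.Embedding.coeFn_mk, mem_map]
  refine ⟨i - 1, ?_, Nat.succ_pred_eq_of_pos (p.parts_pos hi)⟩
  rw [tsub_lt_iff_right (Nat.one_le_iff_ne_zero.mpr (p.parts_pos hi).ne')]
  exact lt_of_le_of_lt this h



end GF

section Part2

open PowerSeries
open scoped Classical

local notation "R2" => PowerSeries (ZMod 2)

lemma ps_add_self (y : R2) : y + y = 0 := by
  ext n
  rw [map_add, map_zero]
  exact CharTwo.add_self_eq_zero _

lemma ps_neg_eq (y : R2) : -y = y := by
  rw [neg_eq_iff_add_eq_zero, ps_add_self]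

lemma ps_one_sub (y : R2) : 1 - y = 1 + y := by
  rw [sub_eq_add_neg, ps_neg_eq]

lemma ps_sq_one_sub (y : R2) : (1 - y) ^ 2 = 1 - y ^ 2 := by
  rw [ps_one_sub y, ps_one_sub (y ^ 2)]
  have h : (1 + y) ^ 2 = 1 + y ^ 2 + (y + y) := by ring
  rw [h, ps_add_self, add_zero]

/-- supported on multiples of `p` -/
def psupp (p : ℕ) (f : R2) : Prop := ∀ j : ℕ, ¬ p ∣ j → coeff j f = 0

lemma psupp_one (p : ℕ) : psupp p 1 := by
  intro j hj
  rw [coeff_one, if_neg]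
  intro h
  exact hj (h ▸ dvd_zero p)

lemma psupp_mul {p : ℕ} {f g : R2} (hf : psupp p f) (hg : psupp p g) : psupp p (f * g) := by
  intro j hj
  rw [coeff_mul]
  apply Finset.sum_eq_zero
  rintro ⟨u, v⟩ hmem
  rw [HasAntidiagonal.mem_antidiagonal] at hmem
  by_cases hu : p ∣ u
  · have hv : ¬ p ∣ v := fun h => hj (hmem ▸ dvd_add hu h)
    rw [hg v hv, mul_zero]
  · rw [hf u hu, zero_mul]

lemma psupp_one_sub_pow {p d : ℕ} (hd : p ∣ d) : psupp p (1 - (X : R2) ^ d) := by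
  intro j hj
  rw [map_sub, coeff_one, coeff_X_pow, if_neg, if_neg, sub_zero]
  · intro h
    exact hj (h ▸ hd)
  · intro h
    exact hj (h ▸ dvd_zero p)

lemma geom_fac (N j : ℕ) :
    (∑ c ∈ Finset.range N, ((X : R2) ^ j) ^ c) * (1 - X ^ j) = 1 - (X ^ j) ^ N := by
  have h := geom_sum_mul ((X : R2) ^ j) N
  linear_combination (-1 : R2) * h

lemma ind_fac (N j : ℕ) (hj : 0 < j) :
    indicatorSeries (ZMod 2) ((· * j) '' {c | c < N})
      = ∑ c ∈ Finset.range N, ((X : R2) ^ j) ^ c := by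
  ext n
  rw [coeff_indicator, map_sum]
  simp_rw [← pow_mul, coeff_X_pow]
  by_cases h : n ∈ (· * j) '' {c | c < N}
  · rw [if_pos h]
    obtain ⟨c₀, hc₀, rfl⟩ := h
    rw [Finset.sum_eq_single c₀]
    · rw [if_pos (mul_comm c₀ j)]
    · intro c hc hne
      rw [if_neg]
      intro hcc
      apply hne
      apply Nat.eq_of_mul_eq_mul_left hj
      rw [← hcc, mul_comm]
    · intro hc
      exact absurd (Finset.mem_range.2 hc₀) hc
  · rw [if_neg h]
    symm
    apply Finset.sum_eq_zero
    intro c hc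
    rw [if_neg]
    intro hcc
    refine h ⟨c, Finset.mem_range.1 hc, ?_⟩
    rw [hcc]
    exact Nat.mul_comm c j

theorem podGF_prop (N M m : ℕ) (hN : 0 < N) (hm : M < 2 * m) :
    ((#(Finset.univ.filter fun q : M.Partition =>
        (∀ j, q.parts.count j < N) ∧ ∀ j ∈ q.parts, ¬ Even j) : ℕ) : ZMod 2)
      = coeff M
        (∏ i ∈ Finset.range m, ∑ c ∈ Finset.range N, ((X : R2) ^ (2 * i + 1)) ^ c) := by
  convert partialGF_prop (ZMod 2) M ((Finset.range m).map mkOdd) _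
    (fun _ => {c | c < N}) (fun i _ => by simp only [Set.mem_setOf_eq]; omega) using 2
  · congr 1
    apply Finset.filter_congr
    intro q _
    constructor
    · rintro ⟨h1, h2⟩
      refine ⟨fun j => h1 j, fun j hj => ?_⟩
      have hjn : j ≤ M := by
        simpa [q.parts_sum] using Multiset.single_le_sum (fun _ _ => Nat.zero_le _) _ hj
      have hodd := h2 j hj
      simp only [mkOdd_apply, Finset.mem_map, Finset.mem_range, Function.Embedding.coeFn_mk]
      rw [Nat.not_even_iff] at hodd
      have := Nat.mod_add_div j 2
      refine ⟨j / 2, by omega, by omega⟩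
    · rintro ⟨h1, h2⟩
      refine ⟨fun j => h1 j, fun j hj => ?_⟩
      obtain ⟨w, -, rfl⟩ := Finset.mem_map.1 (h2 j hj)
      simp only [mkOdd_apply, Function.Embedding.coeFn_mk]
      rw [Nat.even_iff]
      omega
  · rw [Finset.prod_map]
    apply Finset.prod_congr rfl
    intro i _
    simp only [mkOdd_apply, Function.Embedding.coeFn_mk]
    exact (ind_fac N (2 * i + 1) (by omega)).symm
  · intro i hi
    obtain ⟨w, -, rfl⟩ := Finset.mem_map.1 hi
    simp only [mkOdd_apply, Function.Embedding.coeFn_mk]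
    omega

end Part2

section Part2b

open PowerSeries
open scoped Classical

local notation "R2" => PowerSeries (ZMod 2)

lemma P_split (m : ℕ) :
    (∏ i ∈ Finset.range (2 * m), (1 - (X : R2) ^ (i + 1)))
      = (∏ i ∈ Finset.range m, (1 - (X : R2) ^ (2 * i + 1)))
        * (∏ i ∈ Finset.range m, (1 - (X : R2) ^ (i + 1))) ^ 2 := by
  induction m with
  | zero => simp
  | succ m ih =>
    have h2m : 2 * (m + 1) = 2 * m + 1 + 1 := by ring
    rw [h2m, Finset.prod_range_succ, Finset.prod_range_succ, Finset.prod_range_succ,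
      Finset.prod_range_succ, ih]
    have hsq : (1 - (X : R2) ^ (m + 1)) ^ 2 = 1 - (X : R2) ^ (2 * m + 1 + 1) := by
      rw [ps_sq_one_sub, ← pow_mul]
      congr 2
      ring
    rw [← hsq]
    ring

lemma P_ne_zero (t : ℕ) : (∏ i ∈ Finset.range t, (1 - (X : R2) ^ (i + 1))) ≠ 0 := by
  intro h
  have hc : constantCoeff (∏ i ∈ Finset.range t, (1 - (X : R2) ^ (i + 1))) = 1 := by
    rw [map_prod]
    apply Finset.prod_eq_one
    intro i _
    rw [map_sub, map_pow, constantCoeff_one, constantCoeff_X]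
    simp
  rw [h, map_zero] at hc
  exact one_ne_zero hc.symm

lemma P_eq_distinct (t : ℕ) :
    (∏ i ∈ Finset.range t, (1 - (X : R2) ^ (i + 1))) = partialDistinctGF t := by
  apply Finset.prod_congr rfl
  intro i _
  exact ps_one_sub _

theorem podB_even (p l r M : ℕ) (hp : p.Prime) (hl : 0 < l) (hr0 : 0 < r) (hrp : r < p)
    (hqnr : ¬ IsSquare ((24 * r + 1 : ℕ) : ZMod p)) (hM : M % p = r) :
    2 ∣ #(Finset.univ.filter fun q : M.Partition =>
      (∀ j, q.parts.count j < p * l) ∧ ∀ j ∈ q.parts, ¬ Even j) := by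
  set N := p * l with hN
  have hN0 : 0 < N := Nat.mul_pos hp.pos hl
  set m := M + 1 with hm
  -- the generating function
  set GF : R2 := ∏ i ∈ Finset.range m, ∑ c ∈ Finset.range N, ((X : R2) ^ (2 * i + 1)) ^ c
    with hGF
  set Bfac : R2 := ∏ i ∈ Finset.range m, (1 - (X : R2) ^ (2 * i + 1)) with hBfac
  set A : R2 := ∏ i ∈ Finset.range m, (1 - ((X : R2) ^ (2 * i + 1)) ^ N) with hA
  set P : R2 := ∏ i ∈ Finset.range m, (1 - (X : R2) ^ (i + 1)) with hP
  set E : R2 := ∏ i ∈ Finset.range m, (1 - (X : R2) ^ (m + i + 1)) with hE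
  have c1 : ((#(Finset.univ.filter fun q : M.Partition =>
      (∀ j, q.parts.count j < N) ∧ ∀ j ∈ q.parts, ¬ Even j) : ℕ) : ZMod 2)
      = coeff M GF :=
    podGF_prop N M m hN0 (by omega)
  have c2 : GF * Bfac = A := by
    rw [hGF, hBfac, hA, ← Finset.prod_mul_distrib]
    exact Finset.prod_congr rfl fun i _ => geom_fac N (2 * i + 1)
  have c3 : (∏ i ∈ Finset.range (2 * m), (1 - (X : R2) ^ (i + 1))) = Bfac * P ^ 2 := P_split m
  have c4 : (∏ i ∈ Finset.range (2 * m), (1 - (X : R2) ^ (i + 1))) = P * E := by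
    rw [two_mul, Finset.prod_range_add]
  have c5 : GF * E = A * P := by
    apply mul_right_cancel₀ (P_ne_zero m)
    calc GF * E * P = GF * (P * E) := by ring
    _ = GF * (Bfac * P ^ 2) := by rw [← c4, c3]
    _ = (GF * Bfac) * P ^ 2 := by ring
    _ = A * P ^ 2 := by rw [c2]
    _ = A * P * P := by ring
  have c6 : coeff M GF = coeff M (GF * E) := by
    rw [hE]
    symm
    apply coeff_mul_prod_one_sub_of_lt_order
    intro i _
    rw [order_X_pow]
    exact_mod_cast (by omega : M < m + i + 1)
  have hAsupp : psupp p A := by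
    rw [hA]
    apply Finset.prod_induction _ (psupp p) (fun _ _ => psupp_mul) (psupp_one p)
    intro i _
    rw [← pow_mul]
    exact psupp_one_sub_pow ⟨(2 * i + 1) * l, by ring⟩
  have c7 : coeff M (A * P) = 0 := by
    rw [coeff_mul]
    apply Finset.sum_eq_zero
    rintro ⟨u, v⟩ hmem
    rw [HasAntidiagonal.mem_antidiagonal] at hmem
    by_cases hdvd : p ∣ u
    · -- right factor vanishes
      obtain ⟨u', rfl⟩ := hdvd
      have hvr : v % p = r := by
        rw [← hM, ← hmem, Nat.add_comm, Nat.add_mul_mod_self_left]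
      have hvcast : ((v : ℕ) : ZMod p) = ((r : ℕ) : ZMod p) := by
        rw [ZMod.natCast_eq_natCast_iff]
        unfold Nat.ModEq
        rw [hvr, Nat.mod_eq_of_lt hrp]
      have hveven : 2 ∣ #(Nat.Partition.distincts v) := by
        apply distincts_card_even
        · intro j hj
          apply hqnr
          have hj' : ((2 * v : ℕ) : ZMod p) = ((3 * j * j + j : ℕ) : ZMod p) := by rw [hj]
          push_cast at hj'
          refine ⟨6 * (j : ZMod p) + 1, ?_⟩
          push_cast
          linear_combination (-24 : ZMod p) * hvcast + 12 * hj'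
        · intro j hj
          apply hqnr
          have hj' : ((2 * v + j : ℕ) : ZMod p) = ((3 * j * j : ℕ) : ZMod p) := by rw [hj]
          push_cast at hj'
          refine ⟨6 * (j : ZMod p) - 1, ?_⟩
          push_cast
          linear_combination (-24 : ZMod p) * hvcast + 12 * hj'
      have hcoeffP : coeff v P = 0 := by
        rw [hP, P_eq_distinct]
        rw [← distinctGF_prop v m (by omega)]
        rw [ZMod.natCast_eq_zero_iff]
        exact hveven
      rw [hcoeffP, mul_zero]
    · rw [hAsupp u hdvd, zero_mul]
  have hzero : ((#(Finset.univ.filter fun q : M.Partition =>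
      (∀ j, q.parts.count j < N) ∧ ∀ j ∈ q.parts, ¬ Even j) : ℕ) : ZMod 2) = 0 := by
    rw [c1, c6, c5, c7]
  rwa [ZMod.natCast_eq_zero_iff] at hzero

end Part2b


def FrobSet (k n : ℕ) : Set (Σ s : ℕ, (Fin s → ℕ) × (Fin s → ℕ)) :=
  {x | (∀ i j : Fin x.1, i ≤ j → x.2.1 j ≤ x.2.1 i) ∧
    (∀ i j : Fin x.1, i ≤ j → x.2.2 j ≤ x.2.2 i) ∧
    (∀ v : ℕ, (Finset.univ.filter fun i => x.2.1 i = v).card ≤ k) ∧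
    (∀ v : ℕ, (Finset.univ.filter fun i => x.2.2 i = v).card ≤ k) ∧
    n = x.1 + (∑ i, x.2.1 i) + (∑ i, x.2.2 i)}

lemma genFrobPhi_eq_card (k n : ℕ) : genFrobPhi k n = Nat.card (FrobSet k n) := by
  rw [genFrobPhi, ← Nat.card_coe_set_eq]
  rfl

lemma frob_bounds {k n : ℕ} {x : Σ s : ℕ, (Fin s → ℕ) × (Fin s → ℕ)} (hx : x ∈ FrobSet k n) :
    x.1 ≤ n ∧ (∀ i, x.2.1 i ≤ n) ∧ (∀ i, x.2.2 i ≤ n) := by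
  obtain ⟨-, -, -, -, h5⟩ := hx
  refine ⟨by omega, fun i => ?_, fun i => ?_⟩
  · have : x.2.1 i ≤ ∑ j, x.2.1 j :=
      Finset.single_le_sum (fun j _ => Nat.zero_le _) (mem_univ i)
    omega
  · have : x.2.2 i ≤ ∑ j, x.2.2 j :=
      Finset.single_le_sum (fun j _ => Nat.zero_le _) (mem_univ i)
    omega

lemma frob_finite (k n : ℕ) : Finite (FrobSet k n) := by
  let F : FrobSet k n → Fin (n + 1) × (Fin n → Fin (n + 1)) × (Fin n → Fin (n + 1)) :=
    fun x =>
      ⟨⟨x.1.1, by have := (frob_bounds x.2).1; omega⟩,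
       fun i => if h : (i : ℕ) < x.1.1 then
         ⟨x.1.2.1 ⟨i, h⟩, by have := (frob_bounds x.2).2.1 ⟨i, h⟩; omega⟩ else 0,
       fun i => if h : (i : ℕ) < x.1.1 then
         ⟨x.1.2.2 ⟨i, h⟩, by have := (frob_bounds x.2).2.2 ⟨i, h⟩; omega⟩ else 0⟩
  apply Finite.of_injective F
  rintro ⟨⟨s, a, b⟩, hx⟩ ⟨⟨s', a', b'⟩, hy⟩ h
  have hs : s = s' := by
    have := congrArg (fun z => (z.1 : ℕ)) h
    simpa [F] using this
  subst hs
  have hsn : s ≤ n := (frob_bounds hx).1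
  have ha : a = a' := by
    funext i
    have hin : (i : ℕ) < n := lt_of_lt_of_le i.2 hsn
    have h2 := congrArg (fun z => ((z.2.1 ⟨i, hin⟩ : Fin (n + 1)) : ℕ)) h
    simp only [F, dif_pos i.2] at h2
    simpa [Fin.eta] using h2
  have hb : b = b' := by
    funext i
    have hin : (i : ℕ) < n := lt_of_lt_of_le i.2 hsn
    have h2 := congrArg (fun z => ((z.2.2 ⟨i, hin⟩ : Fin (n + 1)) : ℕ)) h
    simp only [F, dif_pos i.2] at h2
    simpa [Fin.eta] using h2
  subst ha; subst hb
  rfl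

/-- the row-swapping involution -/
def frobSwap {k n : ℕ} : FrobSet k n → FrobSet k n :=
  fun ⟨⟨s, a, b⟩, hx⟩ =>
    ⟨⟨s, b, a⟩, by
      obtain ⟨h1, h2, h3, h4, h5⟩ := hx
      refine ⟨h2, h1, h4, h3, ?_⟩
      dsimp only at h5 ⊢
      omega⟩

lemma frobSwap_invol {k n : ℕ} (x : FrobSet k n) : frobSwap (frobSwap x) = x := by
  rcases x with ⟨⟨s, a, b⟩, hx⟩
  rfl


lemma count_ofFn {s : ℕ} (f : Fin s → ℕ) (w : ℕ) :
    (List.ofFn f).count w = #(Finset.univ.filter fun i => f i = w) := by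
  induction s with
  | zero => simp
  | succ s ih =>
    rw [List.ofFn_succ, List.count_cons, ih (fun i => f i.succ)]
    rw [Finset.card_filter, Finset.card_filter, Fin.sum_univ_succ]
    simp only [beq_iff_eq]
    exact Nat.add_comm _ _

lemma fixed_eq {k M : ℕ} {x : FrobSet k M} (hfix : frobSwap x = x) :
    x.1.2.2 = x.1.2.1 := by
  rcases x with ⟨⟨s, a, b⟩, hx⟩
  have h := congrArg Subtype.val hfix
  simp only [frobSwap] at h
  have h2 := (Sigma.mk.inj_iff.1 h).2
  have h3 : ((b, a) : (Fin s → ℕ) × (Fin s → ℕ)) = (a, b) := eq_of_heq h2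
  exact congrArg Prod.fst h3

/-- the partition associated to a symmetric Frobenius array -/
def fixedPart {k M : ℕ} (x : {x : FrobSet k M // frobSwap x = x}) : M.Partition where
  parts := ↑(List.ofFn fun i => 2 * x.1.1.2.1 i + 1)
  parts_pos := by
    intro i hi
    rw [Multiset.mem_coe, List.mem_ofFn] at hi
    obtain ⟨j, rfl⟩ := hi
    omega
  parts_sum := by
    obtain ⟨⟨⟨s, av, bv⟩, hmem⟩, hfix⟩ := x
    simp only [FrobSet, Set.mem_setOf_eq] at hmem
    obtain ⟨-, -, -, -, h5⟩ := hmem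
    have hba : bv = av := fixed_eq hfix
    rw [Multiset.sum_coe, List.sum_ofFn]
    dsimp only at h5 ⊢
    have hsum : ∑ i, (2 * av i + 1) = 2 * (∑ i, av i) + s := by
      rw [Finset.sum_add_distrib, ← Finset.mul_sum]
      simp
    rw [hba] at h5
    omega

lemma fixedPart_mem {k M : ℕ} (x : {x : FrobSet k M // frobSwap x = x}) :
    (∀ j, (fixedPart x).parts.count j < k + 1) ∧ ∀ j ∈ (fixedPart x).parts, ¬ Even j := by
  obtain ⟨⟨⟨s, av, bv⟩, hmem⟩, hfix⟩ := x
  simp only [FrobSet, Set.mem_setOf_eq] at hmem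
  obtain ⟨-, -, h3, -, -⟩ := hmem
  constructor
  · intro j
    have hc : (fixedPart ⟨⟨⟨s, av, bv⟩, _⟩, hfix⟩).parts.count j
        = (List.ofFn fun i => 2 * av i + 1).count j := by
      rw [fixedPart, Multiset.coe_count]
    rw [hc, count_ofFn]
    have hsub : (Finset.univ.filter fun i => 2 * av i + 1 = j)
        ⊆ Finset.univ.filter fun i => av i = (j - 1) / 2 := by
      intro i hi
      simp only [Finset.mem_filter, Finset.mem_univ, true_and] at hi ⊢
      omega
    have h1 := Finset.card_le_card hsub
    have h2 := h3 ((j - 1) / 2)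
    omega
  · intro j hj
    rw [fixedPart, Multiset.mem_coe, List.mem_ofFn] at hj
    obtain ⟨i, rfl⟩ := hj
    rw [Nat.even_iff]
    dsimp only
    omega

open scoped Classical in
theorem frob_parity (k M : ℕ) :
    genFrobPhi k M ≡
      #(Finset.univ.filter fun q : M.Partition =>
        (∀ j, q.parts.count j < k + 1) ∧ ∀ j ∈ q.parts, ¬ Even j) [MOD 2] := by
  classical
  haveI := frob_finite k M
  rw [genFrobPhi_eq_card]
  have step1 := card_modEq_card_fixed (frobSwap (k := k) (n := M)) frobSwap_invol
  haveI : IsAntisymm ℕ (· ≥ ·) := ⟨fun a b h1 h2 => le_antisymm h2 h1⟩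
  haveI : IsTrans ℕ (· ≥ ·) := ⟨fun a b c h1 h2 => le_trans h2 h1⟩
  haveI : IsTotal ℕ (· ≥ ·) := ⟨fun a b => (le_total b a).imp id id⟩
  haveI : IsRefl ℕ (· ≥ ·) := ⟨fun a => le_refl a⟩
  have step2 : Nat.card {x : FrobSet k M // frobSwap x = x}
      = #(Finset.univ.filter fun q : M.Partition =>
        (∀ j, q.parts.count j < k + 1) ∧ ∀ j ∈ q.parts, ¬ Even j) := by
    rw [← Nat.card_eq_finsetCard]
    apply Nat.card_eq_of_bijective (fun x =>
      ⟨fixedPart x, Finset.mem_filter.2 ⟨Finset.mem_univ _, fixedPart_mem x⟩⟩)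
    constructor
    · -- injective
      rintro ⟨⟨⟨s, a, b⟩, hmem⟩, hfix⟩ ⟨⟨⟨s', a', b'⟩, hmem'⟩, hfix'⟩ h
      simp only [FrobSet, Set.mem_setOf_eq] at hmem hmem'
      have hparts := congrArg (fun z => (Subtype.val z).parts) h
      simp only [fixedPart] at hparts
      rw [Multiset.coe_eq_coe] at hparts
      have hlen : s = s' := by
        have := hparts.length_eq
        simpa using this
      subst hlen
      have hsorted1 : List.Pairwise (· ≥ ·) (List.ofFn fun i => 2 * a i + 1) := by
        rw [List.pairwise_ofFn]
        intro i j hij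
        have := hmem.1 i j (le_of_lt hij)
        simp only [ge_iff_le]
        omega
      have hsorted2 : List.Pairwise (· ≥ ·) (List.ofFn fun i => 2 * a' i + 1) := by
        rw [List.pairwise_ofFn]
        intro i j hij
        have := hmem'.1 i j (le_of_lt hij)
        simp only [ge_iff_le]
        omega
      have hLeq := List.Perm.eq_of_pairwise' hsorted1 hsorted2 hparts
      have hfun := List.ofFn_injective hLeq
      have ha : a = a' := by
        funext i
        have := congrFun hfun i
        omega
      have hb : b = a := fixed_eq hfix
      have hb' : b' = a' := fixed_eq hfix'
      subst ha
      apply Subtype.ext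
      apply Subtype.ext
      show (⟨s, a, b⟩ : Σ s : ℕ, (Fin s → ℕ) × (Fin s → ℕ)) = ⟨s, a, b'⟩
      rw [hb, hb']
    · -- surjective
      rintro ⟨q, hq⟩
      rw [Finset.mem_filter] at hq
      obtain ⟨-, hcount, hoddq⟩ := hq
      set L := q.parts.sort (· ≥ ·) with hL
      have hLsorted : List.Pairwise (· ≥ ·) L := Multiset.pairwise_sort _ _
      have hLcoe : (↑L : Multiset ℕ) = q.parts := Multiset.sort_eq _ _
      set s := L.length with hslen
      set a : Fin s → ℕ := fun i => (L.get i - 1) / 2 with hadef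
      have hmemL : ∀ i : Fin s, L.get i ∈ q.parts := by
        intro i
        rw [← hLcoe]
        exact Multiset.mem_coe.2 (List.get_mem L i)
      have hga : ∀ i : Fin s, 2 * a i + 1 = L.get i := by
        intro i
        have h1 : ¬ Even (L.get i) := hoddq _ (hmemL i)
        have h0 : 0 < L.get i := q.parts_pos (hmemL i)
        rw [Nat.even_iff] at h1
        simp only [hadef]
        omega
      have hanti : ∀ i j : Fin s, i ≤ j → a j ≤ a i := by
        intro i j hij
        have := hLsorted.rel_get_of_le hij
        have h1 := hga i
        have h2 := hga j
        simp only [ge_iff_le] at this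
        omega
      have hcnt : ∀ v : ℕ, #(Finset.univ.filter fun i => a i = v) ≤ k := by
        intro v
        have hfe : (Finset.univ.filter fun i => a i = v)
            = Finset.univ.filter fun i => (L.get) i = 2 * v + 1 := by
          apply Finset.filter_congr
          intro i _
          have := hga i
          constructor <;> (intro h; omega)
        rw [hfe, ← count_ofFn, List.ofFn_get]
        have := hcount (2 * v + 1)
        rw [← hLcoe, Multiset.coe_count] at this
        omega
      have hsum : M = s + (∑ i, a i) + (∑ i, a i) := by
        have h1 : q.parts.sum = M := q.parts_sum
        rw [← hLcoe, Multiset.sum_coe] at h1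
        have h2 : L.sum = ∑ i : Fin s, L.get i := by
          conv_lhs => rw [← List.ofFn_get L]
          rw [List.sum_ofFn]
        have h3 : ∑ i : Fin s, L.get i = ∑ i : Fin s, (2 * a i + 1) := by
          apply Finset.sum_congr rfl
          intro i _
          rw [hga i]
        have h4 : ∑ i : Fin s, (2 * a i + 1) = 2 * (∑ i, a i) + s := by
          rw [Finset.sum_add_distrib, Finset.sum_const, Finset.card_univ, Fintype.card_fin,
            Finset.mul_sum]
          simp [Finset.mul_sum]
        omega
      have hmem : (⟨s, a, a⟩ : Σ s : ℕ, (Fin s → ℕ) × (Fin s → ℕ)) ∈ FrobSet k M :=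
        ⟨hanti, hanti, hcnt, hcnt, hsum⟩
      refine ⟨⟨⟨⟨s, a, a⟩, hmem⟩, ?_⟩, ?_⟩
      · apply Subtype.ext
        rfl
      · apply Subtype.ext
        show fixedPart _ = q
        apply Nat.Partition.ext
        show ↑(List.ofFn fun i => 2 * a i + 1) = q.parts
        have : (List.ofFn fun i => 2 * a i + 1) = List.ofFn L.get := by
          congr 1
          funext i
          exact hga i
        rw [this, List.ofFn_get]
        exact hLcoe
  calc Nat.card (FrobSet k M) ≡ Nat.card {x : FrobSet k M // frobSwap x = x} [MOD 2] := step1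
  _ = _ := step2


end PhiParity

theorem phi_parity (p : ℕ) (hp : p.Prime) (hp5 : 5 ≤ p) (l : ℕ) (hl : 0 < l)
    (r : ℕ) (hr0 : 0 < r) (hrp : r < p)
    (hqnr : ¬ IsSquare ((24 * r + 1 : ℕ) : ZMod p)) (n : ℕ) :
    2 ∣ genFrobPhi (p * l - 1) (p * n + r) := by
  set M := p * n + r with hM
  set k := p * l - 1 with hk
  have hk1 : k + 1 = p * l := by
    have := Nat.mul_pos hp.pos hl
    omega
  have hmod : M % p = r := by
    rw [hM, Nat.mul_add_mod, Nat.mod_eq_of_lt hrp]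
  have h1 := PhiParity.frob_parity k M
  have h2 := PhiParity.podB_even p l r M hp hl hr0 hrp hqnr hmod
  rw [← hk1] at h2
  unfold Nat.ModEq at h1
  omega
end

section
/- For every positive integer k, the generating function Φ_k(q) = Σ_{n≥0} φ_k(n) q^n satisfies the congruence Φ_k(q) ≡ (q;q)_∞ / (q^{k+1};q^{k+1})_∞ (mod 2), i.e., all coefficients of the difference of these two power series (as formal power series over ℤ) are even. -/
/-- `(q^m; q^m)_∞ = ∏_{i ≥ 1} (1 - q^{m i})` as a formal power series over ℤ,
defined coefficientwise via the (stabilizing) partial products: for `m ≥ 1`,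
the coefficient of `q^n` in `∏_{i=1}^{N} (1 - q^{m i})` is independent of `N`
once `N ≥ n`. -/
noncomputable def pochSelf (m : ℕ) : PowerSeries ℤ :=
  PowerSeries.mk fun n => PowerSeries.coeff n
    (∏ i ∈ Finset.range (n + 1), (1 - (PowerSeries.X : PowerSeries ℤ) ^ (m * (i + 1))))

open PowerSeries Finset

namespace PhiGenAux

/-! ## Part 1: truncation machinery and power series identities over `ZMod 2` -/

/-- coefficients agree up to degree `d` -/
def TruncEq {R : Type*} [Semiring R] (d : ℕ) (f g : PowerSeries R) : Prop :=
  ∀ j ≤ d, coeff j f = coeff j g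

theorem TruncEq.refl {R : Type*} [Semiring R] {d : ℕ} {f : PowerSeries R} : TruncEq d f f :=
  fun _ _ => rfl

theorem TruncEq.coeff_eq {R : Type*} [Semiring R] {d : ℕ} {f g : PowerSeries R}
    (h : TruncEq d f g) : coeff d f = coeff d g := h d le_rfl

theorem TruncEq.mul {R : Type*} [CommSemiring R] {d : ℕ} {f g F G : PowerSeries R}
    (hf : TruncEq d f F) (hg : TruncEq d g G) : TruncEq d (f * g) (F * G) := by
  intro j hj
  rw [coeff_mul, coeff_mul]
  refine Finset.sum_congr rfl fun p hp => ?_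
  rw [Finset.HasAntidiagonal.mem_antidiagonal] at hp
  rw [hf p.1 (by omega), hg p.2 (by omega)]

theorem truncEq_one_sub_pow {R : Type*} [CommRing R] {d e : ℕ} (h : d < e) :
    TruncEq d (1 - X ^ e : PowerSeries R) 1 := by
  intro j hj
  rw [map_sub, coeff_X_pow, if_neg (by omega), sub_zero]

theorem truncEq_geom {R : Type*} [CommRing R] {d m k : ℕ} (h : d < m) :
    TruncEq d (∑ j ∈ range (k + 1), (X : PowerSeries R) ^ (m * j)) 1 := by
  intro i hi
  rw [map_sum, coeff_one]
  rw [Finset.sum_eq_single 0 (fun j _ hj2 => by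
    rw [coeff_X_pow, if_neg]
    have : m ≤ m * j := Nat.le_mul_of_pos_right m (Nat.pos_of_ne_zero hj2)
    omega)
    (fun h0 => absurd (Finset.mem_range.2 (by omega)) h0)]
  rw [mul_zero, pow_zero, coeff_one]

theorem truncEq_prod_range {R : Type*} [CommSemiring R] {ε : ℕ → PowerSeries R} {d : ℕ}
    (hε : ∀ i, d < i → TruncEq d (ε i) 1) :
    ∀ N, d + 1 ≤ N → TruncEq d (∏ i ∈ range N, ε i) (∏ i ∈ range (d + 1), ε i) := by
  intro N hN
  induction N with
  | zero => omega
  | succ n ih =>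
    rcases Nat.lt_or_ge (d + 1) (n + 1) with h | h
    · rw [prod_range_succ]
      have h1 := (ih (by omega)).mul (hε n (by omega))
      rwa [mul_one] at h1
    · have : n + 1 = d + 1 := by omega
      rw [this]
      exact TruncEq.refl

theorem truncEq_mk {R : Type*} [CommSemiring R] {ε : ℕ → PowerSeries R}
    (hε : ∀ e i, e < i → TruncEq e (ε i) 1) (d N : ℕ) (hN : d + 1 ≤ N) :
    TruncEq d (mk fun j => coeff j (∏ i ∈ range (j + 1), ε i)) (∏ i ∈ range N, ε i) := by
  intro j hj
  rw [coeff_mk]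
  have h1 := truncEq_prod_range (fun i hi => hε j i hi) N (by omega)
  have h2 := truncEq_prod_range (fun i hi => hε j i hi) (j + 1) (by omega)
  rw [h1 j le_rfl, ← h2 j le_rfl]

/-- `(q^m;q^m)_∞` over `ZMod 2` -/
noncomputable def Eser (m : ℕ) : PowerSeries (ZMod 2) :=
  (pochSelf m).map (Int.castRingHom (ZMod 2))

/-- `∏_{i ≥ 0} (1 - q^{m(2i+1)})` over `ZMod 2` -/
noncomputable def Oser (m : ℕ) : PowerSeries (ZMod 2) :=
  mk fun d => coeff d (∏ i ∈ range (d + 1), (1 - X ^ (m * (2 * i + 1))))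

/-- `∏_{i ≥ 0} (1 + q^{2i+1} + ⋯ + q^{k(2i+1)})` over `ZMod 2` -/
noncomputable def Sser (k : ℕ) : PowerSeries (ZMod 2) :=
  mk fun d => coeff d (∏ i ∈ range (d + 1), (∑ j ∈ range (k + 1), X ^ ((2 * i + 1) * j)))

theorem truncEq_E (m : ℕ) (hm : 1 ≤ m) (d N : ℕ) (hN : d + 1 ≤ N) :
    TruncEq d (Eser m) (∏ i ∈ range N, (1 - X ^ (m * (i + 1)) : PowerSeries (ZMod 2))) := by
  have hmap : ∀ j : ℕ, coeff j (Eser m)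
      = coeff j (∏ i ∈ range (j + 1), (1 - X ^ (m * (i + 1)) : PowerSeries (ZMod 2))) := by
    intro j
    rw [Eser, coeff_map, pochSelf, coeff_mk, ← coeff_map]
    congr 1
    simp only [map_prod, map_sub, map_one, map_pow, PowerSeries.map_X]
  intro j hj
  rw [hmap j]
  have hε : ∀ e i, e < i → TruncEq e (1 - X ^ (m * (i + 1)) : PowerSeries (ZMod 2)) 1 := by
    intro e i hi
    refine truncEq_one_sub_pow ?_
    have : i + 1 ≤ m * (i + 1) := Nat.le_mul_of_pos_left _ hm
    omega
  have h1 := truncEq_prod_range (fun i hi => hε j i hi) N (by omega)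
  have h2 := truncEq_prod_range (fun i hi => hε j i hi) (j + 1) (by omega)
  rw [h2 j le_rfl, ← h1 j le_rfl]

theorem truncEq_O (m : ℕ) (hm : 1 ≤ m) (d N : ℕ) (hN : d + 1 ≤ N) :
    TruncEq d (Oser m) (∏ i ∈ range N, (1 - X ^ (m * (2 * i + 1)) : PowerSeries (ZMod 2))) := by
  refine truncEq_mk (fun e i hi => ?_) d N hN
  refine truncEq_one_sub_pow ?_
  have : 2 * i + 1 ≤ m * (2 * i + 1) := Nat.le_mul_of_pos_left _ hm
  omega

theorem truncEq_S (k : ℕ) (d N : ℕ) (hN : d + 1 ≤ N) :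
    TruncEq d (Sser k)
      (∏ i ∈ range N, (∑ j ∈ range (k + 1), (X : PowerSeries (ZMod 2)) ^ ((2 * i + 1) * j))) := by
  refine truncEq_mk (fun e i hi => ?_) d N hN
  exact truncEq_geom (by omega)

theorem two_eq_zero' : (2 : PowerSeries (ZMod 2)) = 0 := by
  rw [← map_ofNat (C (R := ZMod 2)) 2, show ((OfNat.ofNat 2 : ZMod 2)) = 0 from rfl, map_zero]

theorem F1 (k N : ℕ) :
    (∏ i ∈ range N, (1 - X ^ (1 * (2 * i + 1)) : PowerSeries (ZMod 2)))
      * ∏ i ∈ range N, (∑ j ∈ range (k + 1), (X : PowerSeries (ZMod 2)) ^ ((2 * i + 1) * j))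
      = ∏ i ∈ range N, (1 - X ^ ((k + 1) * (2 * i + 1))) := by
  rw [← prod_mul_distrib]
  refine prod_congr rfl fun i _ => ?_
  have hg := geom_sum_mul ((X : PowerSeries (ZMod 2)) ^ (2 * i + 1)) (k + 1)
  simp only [← pow_mul] at hg
  have he : (2 * i + 1) * (k + 1) = (k + 1) * (2 * i + 1) := by ring
  rw [he] at hg
  rw [one_mul]
  linear_combination -hg

theorem F2 (m : ℕ) (M : ℕ) :
    ∏ i ∈ range (2 * M), (1 - X ^ (m * (i + 1)) : PowerSeries (ZMod 2))
      = (∏ i ∈ range M, (1 - X ^ (m * (2 * i + 1))))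
        * ∏ i ∈ range M, (1 - X ^ (2 * m * (i + 1))) := by
  induction M with
  | zero => simp
  | succ M ih =>
    rw [show 2 * (M + 1) = (2 * M + 1) + 1 by ring, prod_range_succ, prod_range_succ,
      prod_range_succ, prod_range_succ, ih,
      show m * (2 * M + 1 + 1) = 2 * m * (M + 1) by ring]
    ring

theorem F3 (m N : ℕ) :
    (∏ i ∈ range N, (1 - X ^ (m * (i + 1)) : PowerSeries (ZMod 2))) ^ 2
      = ∏ i ∈ range N, (1 - X ^ (2 * m * (i + 1))) := by
  rw [← prod_pow]
  refine prod_congr rfl fun i _ => ?_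
  have h : (1 - X ^ (m * (i + 1)) : PowerSeries (ZMod 2)) ^ 2
      = 1 - (X ^ (m * (i + 1))) ^ 2 + 2 * ((X ^ (m * (i + 1))) ^ 2 - X ^ (m * (i + 1))) := by
    ring
  rw [h, two_eq_zero', ← pow_mul, show m * (i + 1) * 2 = 2 * m * (i + 1) by ring]
  ring

theorem OS_eq (k : ℕ) : Oser 1 * Sser k = Oser (k + 1) := by
  ext d
  rw [((truncEq_O 1 le_rfl d (d + 1) le_rfl).mul (truncEq_S k d (d + 1) le_rfl)).coeff_eq,
    F1 k (d + 1), ← (truncEq_O (k + 1) (by omega) d (d + 1) le_rfl).coeff_eq]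

theorem E_split (m : ℕ) (hm : 1 ≤ m) : Eser m = Oser m * Eser (2 * m) := by
  ext d
  rw [((truncEq_O m hm d (d + 1) le_rfl).mul (truncEq_E (2 * m) (by omega) d (d + 1) le_rfl)).coeff_eq,
    ← F2 m (d + 1), ← (truncEq_E m hm d (2 * (d + 1)) (by omega)).coeff_eq]

theorem E_sq (m : ℕ) (hm : 1 ≤ m) : Eser (2 * m) = (Eser m) ^ 2 := by
  ext d
  have h := (truncEq_E m hm d (d + 1) le_rfl).mul (truncEq_E m hm d (d + 1) le_rfl)
  rw [pow_two, h.coeff_eq, ← pow_two, F3 m (d + 1),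
    ← (truncEq_E (2 * m) (by omega) d (d + 1) le_rfl).coeff_eq]

theorem constE (m : ℕ) (hm : 1 ≤ m) : constantCoeff (Eser m) = 1 := by
  have h := (truncEq_E m hm 0 1 le_rfl).coeff_eq
  rw [coeff_zero_eq_constantCoeff] at h
  rw [h, prod_range_one, map_sub, map_one, map_pow, constantCoeff_X, zero_pow (by omega), sub_zero]

theorem constS (k : ℕ) : constantCoeff (Sser k) = 1 := by
  have h := (truncEq_S k 0 1 le_rfl).coeff_eq
  rw [coeff_zero_eq_constantCoeff] at h
  rw [h, prod_range_one, map_sum]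
  rw [Finset.sum_eq_single 0 (fun j _ hj2 => by
      rw [map_pow, constantCoeff_X, zero_pow (by omega)])
    (fun h0 => absurd (Finset.mem_range.2 (by omega)) h0)]
  simp

theorem key (k : ℕ) : Sser k * Eser (k + 1) = Eser 1 := by
  have h1 : Eser 1 = Oser 1 * (Eser 1) ^ 2 := by
    rw [← E_sq 1 le_rfl, ← E_split 1 le_rfl]
  have hk1 : Eser (k + 1) = Oser (k + 1) * (Eser (k + 1)) ^ 2 := by
    rw [← E_sq (k + 1) (by omega), ← E_split (k + 1) (by omega)]
  set W := Sser k * Eser (k + 1) with hWdef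
  have hW : W = Oser 1 * W ^ 2 := by
    calc W = Sser k * (Oser (k + 1) * (Eser (k + 1)) ^ 2) := by rw [← hk1]
    _ = Sser k * ((Oser 1 * Sser k) * (Eser (k + 1)) ^ 2) := by rw [OS_eq]
    _ = Oser 1 * W ^ 2 := by rw [hWdef]; ring
  have hWne : W * Eser 1 ≠ 0 := by
    intro h0
    have hc := congrArg (constantCoeff) h0
    rw [map_mul, map_mul, constS, constE (k + 1) (by omega), constE 1 le_rfl, map_zero] at hc
    norm_num at hc
  have hkey : W * Eser 1 ^ 2 = Eser 1 * W ^ 2 := by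
    conv_lhs => rw [hW]
    conv_rhs => rw [h1]
    ring
  have hc : (W * Eser 1) * Eser 1 = (W * Eser 1) * W := by linear_combination hkey
  exact (mul_left_cancel₀ hWne hc).symm

/-! ## Part 2: combinatorics -/

/-- the multiset of values of a tuple -/
def Mof {s : ℕ} (a : Fin s → ℕ) : Multiset ℕ := Multiset.map a Finset.univ.val

theorem cnt_eq {s : ℕ} (a : Fin s → ℕ) (v : ℕ) :
    (Finset.univ.filter fun i => a i = v).card = Multiset.count v (Mof a) := by
  rw [Mof, Multiset.count_map, Finset.card_def, Finset.filter_val]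
  congr 1
  exact Multiset.filter_congr (fun x _ => by constructor <;> exact fun h => h.symm)

theorem Mof_coe {s : ℕ} (a : Fin s → ℕ) : Mof a = ↑(List.ofFn a) := by
  rw [Mof, Fin.univ_def, List.ofFn_eq_map]
  rfl

theorem card_Mof {s : ℕ} (a : Fin s → ℕ) : Multiset.card (Mof a) = s := by
  rw [Mof, Multiset.card_map]
  simp

theorem sum_Mof {s : ℕ} (a : Fin s → ℕ) : (Mof a).sum = ∑ i, a i := rfl

theorem count_sums {N : ℕ} (M : Multiset ℕ) (hM : ∀ v ∈ M, v < N) :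
    (∑ v ∈ range N, Multiset.count v M) = Multiset.card M ∧
      (∑ v ∈ range N, v * Multiset.count v M) = M.sum := by
  induction M using Multiset.induction_on with
  | empty => simp
  | cons a M ih =>
    obtain ⟨h1, h2⟩ := ih (fun v hv => hM v (Multiset.mem_cons_of_mem hv))
    have ha : a ∈ range N := Finset.mem_range.2 (hM a (Multiset.mem_cons_self a M))
    constructor
    · rw [show (∑ v ∈ range N, Multiset.count v (a ::ₘ M))
          = ∑ v ∈ range N, (Multiset.count v M + if v = a then 1 else 0) by
        exact Finset.sum_congr rfl fun v _ => by rw [Multiset.count_cons]]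
      rw [Finset.sum_add_distrib, h1, Finset.sum_ite_eq' (range N) a (fun _ => 1), if_pos ha,
        Multiset.card_cons]
    · rw [show (∑ v ∈ range N, v * Multiset.count v (a ::ₘ M))
          = ∑ v ∈ range N, (v * Multiset.count v M + if v = a then v else 0) by
        refine Finset.sum_congr rfl fun v _ => by
          rw [Multiset.count_cons, Nat.mul_add, mul_ite, mul_one, mul_zero]]
      rw [Finset.sum_add_distrib, h2, Finset.sum_ite_eq' (range N) a (fun v => v), if_pos ha,
        Multiset.sum_cons]
      omega

instance : IsAntisymm ℕ (fun x y => y ≤ x) := ⟨fun _ _ h1 h2 => le_antisymm h2 h1⟩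

theorem sorted_ofFn {s : ℕ} {a : Fin s → ℕ} (ha : ∀ i j : Fin s, i ≤ j → a j ≤ a i) :
    (List.ofFn a).Pairwise (fun x y => y ≤ x) := by
  rw [List.pairwise_ofFn]
  intro i j hij
  exact ha i j (le_of_lt hij)

theorem antitone_inj {s : ℕ} (a a' : Fin s → ℕ)
    (ha : ∀ i j : Fin s, i ≤ j → a j ≤ a i) (ha' : ∀ i j : Fin s, i ≤ j → a' j ≤ a' i)
    (h : Mof a = Mof a') : a = a' := by
  rw [Mof_coe, Mof_coe, Multiset.coe_eq_coe] at h
  exact List.ofFn_injective (List.Perm.eq_of_pairwise' (sorted_ofFn ha) (sorted_ofFn ha') h)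

theorem exists_antitone (M : Multiset ℕ) :
    ∃ (s : ℕ) (a : Fin s → ℕ), (∀ i j : Fin s, i ≤ j → a j ≤ a i) ∧ Mof a = M := by
  set l := (Multiset.sort M (· ≤ ·)).reverse with hl
  refine ⟨l.length, l.get, ?_, ?_⟩
  · have hs : l.Pairwise (fun x y => y ≤ x) := by
      rw [hl, List.pairwise_reverse]
      exact Multiset.pairwise_sort M _
    intro i j hij
    rcases eq_or_lt_of_le hij with h | h
    · rw [h]
    · exact List.pairwise_iff_get.1 hs i j h
  · rw [Mof_coe, List.ofFn_get, hl, Multiset.coe_reverse, Multiset.sort_eq]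

theorem count_build {n : ℕ} (g : Fin (n + 1) → ℕ) (v : ℕ) :
    Multiset.count v (∑ i : Fin (n + 1), g i • ({(i : ℕ)} : Multiset ℕ))
      = if h : v < n + 1 then g ⟨v, h⟩ else 0 := by
  have h0 : Multiset.count v (∑ i : Fin (n + 1), g i • ({(i : ℕ)} : Multiset ℕ))
      = ∑ i : Fin (n + 1), g i * (if v = (i : ℕ) then 1 else 0) := by
    rw [← Multiset.coe_countAddMonoidHom, map_sum]
    refine Finset.sum_congr rfl fun i _ => ?_
    rw [Multiset.coe_countAddMonoidHom, Multiset.count_nsmul, Multiset.count_singleton]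
  rw [h0]
  split_ifs with h
  · rw [show (∑ i : Fin (n + 1), g i * (if v = (i : ℕ) then 1 else 0))
        = ∑ i : Fin (n + 1), (if i = ⟨v, h⟩ then g i else 0) by
      refine Finset.sum_congr rfl fun i _ => ?_
      rcases eq_or_ne i ⟨v, h⟩ with rfl | hne
      · simp
      · rw [if_neg hne, if_neg (fun hv => hne (Fin.ext hv.symm)), mul_zero]]
    rw [Finset.sum_ite_eq' Finset.univ (⟨v, h⟩ : Fin (n + 1)) g, if_pos (Finset.mem_univ _)]
  · refine Finset.sum_eq_zero fun i _ => ?_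
    have : ¬ (v = (i : ℕ)) := fun hv => h (by omega)
    rw [if_neg this, mul_zero]

def PhiSet (k n : ℕ) : Set (Σ s : ℕ, (Fin s → ℕ) × (Fin s → ℕ)) :=
  {x : Σ s : ℕ, (Fin s → ℕ) × (Fin s → ℕ) |
    (∀ i j : Fin x.1, i ≤ j → x.2.1 j ≤ x.2.1 i) ∧
    (∀ i j : Fin x.1, i ≤ j → x.2.2 j ≤ x.2.2 i) ∧
    (∀ v : ℕ, (Finset.univ.filter fun i => x.2.1 i = v).card ≤ k) ∧
    (∀ v : ℕ, (Finset.univ.filter fun i => x.2.2 i = v).card ≤ k) ∧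
    n = x.1 + (∑ i, x.2.1 i) + (∑ i, x.2.2 i)}

theorem genFrobPhi_eq (k n : ℕ) : genFrobPhi k n = (PhiSet k n).ncard := rfl

theorem phiSet_bound {k n : ℕ} {x : Σ s : ℕ, (Fin s → ℕ) × (Fin s → ℕ)} (hx : x ∈ PhiSet k n) :
    x.1 ≤ n ∧ (∀ i, x.2.1 i ≤ n) ∧ (∀ i, x.2.2 i ≤ n) := by
  obtain ⟨-, -, -, -, h5⟩ := hx
  refine ⟨by omega, fun i => ?_, fun i => ?_⟩
  · have := Finset.single_le_sum (f := x.2.1) (fun j _ => Nat.zero_le _) (Finset.mem_univ i)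
    omega
  · have := Finset.single_le_sum (f := x.2.2) (fun j _ => Nat.zero_le _) (Finset.mem_univ i)
    omega

theorem phiSet_finite (k n : ℕ) : (PhiSet k n).Finite := by
  classical
  rw [← Set.finite_coe_iff]
  refine Finite.of_injective (fun x : PhiSet k n =>
      ((⟨x.1.1, by have := (phiSet_bound x.2).1; omega⟩ : Fin (n + 1)),
       (fun i : Fin n => if h : (i : ℕ) < x.1.1 then
          (⟨x.1.2.1 ⟨i, h⟩, by have := (phiSet_bound x.2).2.1 ⟨i, h⟩; omega⟩ : Fin (n + 1)) else 0),
       (fun i : Fin n => if h : (i : ℕ) < x.1.1 then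
          (⟨x.1.2.2 ⟨i, h⟩, by have := (phiSet_bound x.2).2.2 ⟨i, h⟩; omega⟩ : Fin (n + 1)) else 0)))
    ?_
  rintro ⟨⟨s, a, b⟩, hx⟩ ⟨⟨s', a', b'⟩, hy⟩ h
  simp only [Prod.mk.injEq, Fin.mk.injEq] at h
  obtain ⟨h1, h2, h3⟩ := h
  subst h1
  have hsn : s ≤ n := (phiSet_bound hx).1
  have hab : a = a' ∧ b = b' := by
    constructor <;> [skip; skip] <;> funext i
    · have hcf := congrFun h2 ⟨i.1, by omega⟩
      rw [dif_pos i.2, dif_pos i.2, Fin.mk.injEq] at hcf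
      simpa using hcf
    · have hcf := congrFun h3 ⟨i.1, by omega⟩
      rw [dif_pos i.2, dif_pos i.2, Fin.mk.injEq] at hcf
      simpa using hcf
  obtain ⟨rfl, rfl⟩ := hab
  rfl

theorem parity_filter {β : Type*} [DecidableEq β] (s : Finset β) (σ : β → β)
    (hmem : ∀ x ∈ s, σ x ∈ s) (hinv : ∀ x ∈ s, σ (σ x) = x) (p : β → Prop) [DecidablePred p]
    (hfix : ∀ x ∈ s, (p x ↔ σ x = x)) :
    ((s.card : ZMod 2)) = ((s.filter p).card : ZMod 2) := by
  classical
  rw [← Finset.card_filter_add_card_filter_not (s := s) (p := p)]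
  push_cast
  have h0 : (((s.filter fun x => ¬ p x).card : ZMod 2)) = 0 := by
    rw [Finset.card_eq_sum_ones]
    push_cast
    refine Finset.sum_involution (fun x _ => σ x) (fun x hx => by decide)
      (fun x hx h1 => ?_) (fun x hx => ?_) (fun x hx => ?_)
    · obtain ⟨hxs, hnp⟩ := Finset.mem_filter.1 hx
      exact fun he => hnp ((hfix x hxs).2 he)
    · obtain ⟨hxs, hnp⟩ := Finset.mem_filter.1 hx
      refine Finset.mem_filter.2 ⟨hmem x hxs, fun hp => hnp ?_⟩
      have h2 := (hfix (σ x) (hmem x hxs)).1 hp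
      rw [hinv x hxs] at h2
      exact (hfix x hxs).2 h2.symm
    · obtain ⟨hxs, _⟩ := Finset.mem_filter.1 hx
      exact hinv x hxs
  rw [h0, add_zero]

theorem sigma_mk_snd_inj {s : ℕ} {p q : (Fin s → ℕ) × (Fin s → ℕ)}
    (h : (⟨s, p⟩ : Σ s, (Fin s → ℕ) × (Fin s → ℕ)) = ⟨s, q⟩) : p = q :=
  eq_of_heq (Sigma.mk.inj_iff.1 h).2

theorem mem_Mof_bound {k n : ℕ} {x : Σ s : ℕ, (Fin s → ℕ) × (Fin s → ℕ)} (hx : x ∈ PhiSet k n)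
    {v : ℕ} (hv : v ∈ Mof x.2.1) : v < n + 1 := by
  obtain ⟨j, -, rfl⟩ := Multiset.mem_map.1 hv
  have := (phiSet_bound hx).2.1 j
  omega

theorem count_split (c : ℕ → ℕ) (N : ℕ) :
    (∑ v ∈ range N, (2 * v + 1) * c v) = 2 * (∑ v ∈ range N, v * c v) + ∑ v ∈ range N, c v := by
  rw [Finset.mul_sum, ← Finset.sum_add_distrib]
  exact Finset.sum_congr rfl fun v _ => by ring

theorem fixed_card (k n : ℕ) :
    (((phiSet_finite k n).toFinset.filter fun x => x.2.1 = x.2.2).card)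
      = (((Fintype.piFinset fun _ : Fin (n + 1) => range (k + 1)).filter
          fun g => (∑ i : Fin (n + 1), (2 * i.1 + 1) * g i) = n).card) := by
  classical
  refine Finset.card_bij
    (fun x _ => fun v : Fin (n + 1) => (Finset.univ.filter fun j => x.2.1 j = v.1).card)
    ?_ ?_ ?_
  · rintro x hx
    obtain ⟨hxS, hfixx⟩ := Finset.mem_filter.1 hx
    rw [Set.Finite.mem_toFinset] at hxS
    have hxmem := hxS
    obtain ⟨ha, -, hc, -, h5⟩ := hxS
    refine Finset.mem_filter.2 ⟨Fintype.mem_piFinset.2 fun v => Finset.mem_range.2 (by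
      exact Nat.lt_succ_of_le (hc v.1)), ?_⟩
    have hb : ∀ v ∈ Mof x.2.1, v < n + 1 := fun v hv => mem_Mof_bound hxmem hv
    obtain ⟨hcard, hsum⟩ := count_sums (Mof x.2.1) hb
    have hconv : (∑ i : Fin (n + 1), (2 * i.1 + 1)
          * (Finset.univ.filter fun j => x.2.1 j = i.1).card)
        = ∑ v ∈ range (n + 1), (2 * v + 1) * Multiset.count v (Mof x.2.1) := by
      rw [← Fin.sum_univ_eq_sum_range]
      exact Finset.sum_congr rfl fun i _ => by rw [cnt_eq]
    dsimp only
    rw [hconv, count_split, hcard, hsum, sum_Mof, card_Mof]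
    rw [← hfixx] at h5
    omega
  · rintro x hx y hy hxy
    obtain ⟨hxS, hfixx⟩ := Finset.mem_filter.1 hx
    obtain ⟨hyS, hfixy⟩ := Finset.mem_filter.1 hy
    rw [Set.Finite.mem_toFinset] at hxS hyS
    have hcnt : ∀ v : ℕ, Multiset.count v (Mof x.2.1) = Multiset.count v (Mof y.2.1) := by
      intro v
      rcases Nat.lt_or_ge v (n + 1) with h | h
      · have := congrFun hxy ⟨v, h⟩
        dsimp only at this
        rw [cnt_eq, cnt_eq] at this
        exact this
      · rw [Multiset.count_eq_zero_of_notMem (fun hm => by have := mem_Mof_bound hxS hm; omega),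
          Multiset.count_eq_zero_of_notMem (fun hm => by have := mem_Mof_bound hyS hm; omega)]
    have hMof : Mof x.2.1 = Mof y.2.1 := Multiset.ext.2 hcnt
    obtain ⟨sx, ax, bx⟩ := x
    obtain ⟨sy, ay, by'⟩ := y
    have hss : sx = sy := by
      have h1 := card_Mof ax
      have h2 := card_Mof ay
      rw [show Mof ax = Mof ay from hMof] at h1
      omega
    subst hss
    have haa : ax = ay := antitone_inj ax ay hxS.1 hyS.1 hMof
    have hbb : bx = by' := by
      have h1 : ax = bx := hfixx
      have h2 : ay = by' := hfixy
      rw [← h1, ← h2, haa]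
    rw [haa, hbb]
  · rintro g hg
    obtain ⟨hgpi, hgsum⟩ := Finset.mem_filter.1 hg
    set M : Multiset ℕ := ∑ i : Fin (n + 1), g i • ({(i.1 : ℕ)} : Multiset ℕ) with hM
    have hMb : ∀ v ∈ M, v < n + 1 := by
      intro v hv
      by_contra hge
      have h0 : Multiset.count v M = 0 := by rw [hM, count_build g v, dif_neg hge]
      exact (Multiset.count_eq_zero.1 h0) hv
    obtain ⟨s, a, ha, hMof⟩ := exists_antitone M
    have hcnts : ∀ v : Fin (n + 1), (Finset.univ.filter fun j => a j = v.1).card = g v := by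
      intro v
      rw [cnt_eq, hMof, hM, count_build g v.1, dif_pos v.2]
    have hcle : ∀ v : ℕ, (Finset.univ.filter fun j => a j = v).card ≤ k := by
      intro v
      rcases Nat.lt_or_ge v (n + 1) with h | h
      · rw [cnt_eq, hMof, hM, count_build g v, dif_pos h]
        have := Fintype.mem_piFinset.1 hgpi ⟨v, h⟩
        rw [Finset.mem_range] at this
        omega
      · rw [cnt_eq, hMof, hM, count_build g v, dif_neg (by omega)]
        exact Nat.zero_le k
    obtain ⟨hcard, hsum⟩ := count_sums M hMb
    have hn : n = s + (∑ i, a i) + (∑ i, a i) := by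
      have h1 : (∑ i : Fin (n + 1), (2 * i.1 + 1) * g i)
          = ∑ v ∈ range (n + 1), (2 * v + 1) * Multiset.count v M := by
        rw [← Fin.sum_univ_eq_sum_range]
        refine Finset.sum_congr rfl fun i _ => ?_
        rw [hM, count_build g i.1, dif_pos i.2]
      rw [h1, count_split, hcard, hsum] at hgsum
      have h2 := card_Mof a
      have h3 := sum_Mof a
      rw [hMof] at h2 h3
      omega
    refine ⟨⟨s, a, a⟩, ?_, ?_⟩
    · refine Finset.mem_filter.2 ⟨Set.Finite.mem_toFinset _ |>.2 ⟨ha, ha, hcle, hcle, hn⟩, rfl⟩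
    · funext v
      exact hcnts v

theorem coeff_Sprod (k n : ℕ) :
    PowerSeries.coeff n
        (∏ i ∈ range (n + 1), (∑ j ∈ range (k + 1), (X : PowerSeries (ZMod 2)) ^ ((2 * i + 1) * j)))
      = (((Fintype.piFinset fun _ : Fin (n + 1) => range (k + 1)).filter
          fun g => (∑ i : Fin (n + 1), (2 * i.1 + 1) * g i) = n).card : ZMod 2) := by
  classical
  rw [← Fin.prod_univ_eq_prod_range
        (fun i => ∑ j ∈ range (k + 1), (X : PowerSeries (ZMod 2)) ^ ((2 * i + 1) * j)) (n + 1)]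
  rw [Finset.prod_univ_sum (fun _ : Fin (n + 1) => range (k + 1))
        (fun i j => (X : PowerSeries (ZMod 2)) ^ ((2 * i.1 + 1) * j))]
  rw [map_sum]
  have hterm : ∀ g : Fin (n + 1) → ℕ,
      PowerSeries.coeff n (∏ i : Fin (n + 1), (X : PowerSeries (ZMod 2)) ^ ((2 * i.1 + 1) * g i))
        = if (∑ i : Fin (n + 1), (2 * i.1 + 1) * g i) = n then 1 else 0 := by
    intro g
    rw [Finset.prod_pow_eq_pow_sum, coeff_X_pow]
    by_cases h : (∑ i : Fin (n + 1), (2 * i.1 + 1) * g i) = n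
    · rw [if_pos h, if_pos h.symm]
    · rw [if_neg h, if_neg (fun hn => h hn.symm)]
  rw [Finset.sum_congr rfl (fun g _ => hterm g)]
  rw [Finset.card_filter]
  push_cast
  rfl

/-- the mod-2 combinatorial identity: `φ_k(n)` is congruent to the coefficient of the
odd-parts product -/
theorem phi_parity (k n : ℕ) :
    ((genFrobPhi k n : ℕ) : ZMod 2) = PowerSeries.coeff n
      (∏ i ∈ range (n + 1), (∑ j ∈ range (k + 1), (X : PowerSeries (ZMod 2)) ^ ((2 * i + 1) * j))) := by
  classical
  rw [coeff_Sprod, ← fixed_card, genFrobPhi_eq,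
    Set.ncard_eq_toFinset_card _ (phiSet_finite k n)]
  refine parity_filter _ (fun x => ⟨x.1, (x.2.2, x.2.1)⟩) ?_ ?_ _ ?_
  · intro x hx
    rw [Set.Finite.mem_toFinset] at hx ⊢
    obtain ⟨h1, h2, h3, h4, h5⟩ := hx
    refine ⟨h2, h1, h4, h3, ?_⟩
    dsimp only
    omega
  · intro x _
    rfl
  · intro x hx
    constructor
    · intro hp
      obtain ⟨s, a, b⟩ := x
      dsimp only at hp ⊢
      rw [hp]
    · intro he
      have := sigma_mk_snd_inj he
      exact (congrArg Prod.fst this).symm ▸ (congrArg Prod.snd this) ▸ rfl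

end PhiGenAux

/-- Φ_k(q) ≡ (q;q)_∞ / (q^{k+1};q^{k+1})_∞ (mod 2): every coefficient of the
difference of these integer power series is even.  Here the reciprocal of
`(q^{k+1};q^{k+1})_∞` is its power-series inverse (its constant term is 1). -/
theorem phi_genfun_mod_two (k : ℕ) (hk : 0 < k) (n : ℕ) :
    2 ∣ PowerSeries.coeff n
      ((PowerSeries.mk fun m => (genFrobPhi k m : ℤ)) -
        pochSelf 1 * PowerSeries.invOfUnit (pochSelf (k + 1)) 1) := by
  classical
  set ψ := Int.castRingHom (ZMod 2) with hψ
  set F := (PowerSeries.mk fun m => (genFrobPhi k m : ℤ)) -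
      pochSelf 1 * PowerSeries.invOfUnit (pochSelf (k + 1)) 1 with hF
  have h2 : ((2 : ℕ) : ℤ) = (2 : ℤ) := by norm_num
  rw [show (2 : ℤ) = ((2 : ℕ) : ℤ) from rfl, ← ZMod.intCast_zmod_eq_zero_iff_dvd]
  have hmap : ((PowerSeries.coeff n F : ℤ) : ZMod 2)
      = PowerSeries.coeff n (PowerSeries.map ψ F) := (PowerSeries.coeff_map ψ n F).symm
  rw [hmap]
  have hconst : PowerSeries.constantCoeff (pochSelf (k + 1)) = ((1 : ℤˣ) : ℤ) := by
    rw [pochSelf, ← PowerSeries.coeff_zero_eq_constantCoeff_apply, PowerSeries.coeff_mk,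
      Finset.prod_range_one, map_sub, PowerSeries.coeff_one, if_pos rfl,
      PowerSeries.coeff_X_pow, if_neg (by omega), sub_zero]
    rfl
  have hEJ : PhiGenAux.Eser (k + 1)
      * (PowerSeries.map ψ (PowerSeries.invOfUnit (pochSelf (k + 1)) 1)) = 1 := by
    rw [PhiGenAux.Eser, ← map_mul, PowerSeries.mul_invOfUnit _ _ hconst, map_one]
  have hphi : PowerSeries.map ψ (PowerSeries.mk fun m => (genFrobPhi k m : ℤ))
      = PhiGenAux.Sser k := by
    ext d
    rw [PowerSeries.coeff_map, PowerSeries.coeff_mk, PhiGenAux.Sser, PowerSeries.coeff_mk,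
      ← PhiGenAux.phi_parity k d]
    rfl
  have hfinal : PowerSeries.map ψ F = 0 := by
    rw [hF, map_sub, map_mul, hphi]
    have hE1 : PowerSeries.map ψ (pochSelf 1) = PhiGenAux.Eser 1 := rfl
    rw [hE1, ← PhiGenAux.key k, mul_assoc, hEJ, mul_one, sub_self]
  rw [hfinal, map_zero]
end

section
/- For all positive integers k and all n ≥ 0, the generalized Frobenius partition function with 2k colors satisfies cφ_{2k}(2n+1) ≡ 0 (mod 2). -/
/-- Andrews' `m`-colored generalized Frobenius partition function `cφ_m(n)`:
the constant term (coefficient of `z⁰ qⁿ`) in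
`Π_{v ≥ 0} (1 + z q^{v+1})^m (1 + z⁻¹ q^v)^m`.  Expanding the product, this
constant term counts pairs of finite sets `S, T ⊆ ℕ × Fin m` (the top and
bottom rows of colored entries) with `|S| = |T|` and
`n = Σ_{(v,c) ∈ S} (v+1) + Σ_{(v,c) ∈ T} v = |S| + Σ_S v + Σ_T v`. -/
noncomputable def genFrobCPhi (m n : ℕ) : ℕ :=
  Set.ncard {ST : Finset (ℕ × Fin m) × Finset (ℕ × Fin m) |
    ST.1.card = ST.2.card ∧
    n = ST.1.card + (∑ x ∈ ST.1, x.1) + (∑ x ∈ ST.2, x.1)}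

section aux

open Fin.NatCast

variable (k : ℕ) [NeZero k]

/-- Swap colors by adding `k` in `Fin (2k)`. -/
def colorSwap (x : ℕ × Fin (2 * k)) : ℕ × Fin (2 * k) :=
  (x.1, x.2 + (k : Fin (2 * k)))

lemma two_k_ne : (2 * k) ≠ 0 := by
  have := NeZero.ne k; omega

instance : NeZero (2 * k) := ⟨two_k_ne k⟩

lemma k_cast_ne_zero : (k : Fin (2 * k)) ≠ 0 := by
  have hk := Nat.pos_of_ne_zero (NeZero.ne k)
  intro h
  have : (k : Fin (2 * k)).val = 0 := by rw [h]; rfl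
  rw [Fin.val_natCast, Nat.mod_eq_of_lt (by omega)] at this
  omega

lemma colorSwap_invol (x : ℕ × Fin (2 * k)) : colorSwap k (colorSwap k x) = x := by
  unfold colorSwap
  have : (k : Fin (2 * k)) + (k : Fin (2 * k)) = 0 := by
    rw [← Nat.cast_add]
    have : k + k = 2 * k := by ring
    rw [this, Fin.natCast_self]
  simp [add_assoc, this]

lemma colorSwap_ne (x : ℕ × Fin (2 * k)) : colorSwap k x ≠ x := by
  unfold colorSwap
  intro h
  have h2 := congrArg Prod.snd h
  simp only at h2
  have h3 : x.2 + (k : Fin (2 * k)) = x.2 + 0 := by simpa using h2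
  exact k_cast_ne_zero k (add_left_cancel h3)

lemma colorSwap_inj : Function.Injective (colorSwap k) :=
  Function.Involutive.injective (colorSwap_invol k)

/-- Sum of a color-blind `ZMod 2`-valued function over a `colorSwap`-invariant finset
is zero. -/
lemma sum_invariant_zero (S : Finset (ℕ × Fin (2 * k)))
    (hS : S.image (colorSwap k) = S) (f : ℕ → ZMod 2) :
    ∑ x ∈ S, f x.1 = 0 := by
  refine Finset.sum_involution (fun a _ => colorSwap k a) ?_ ?_ ?_ ?_
  · intro a _; rw [show (colorSwap k a).1 = a.1 from rfl]; exact CharTwo.add_self_eq_zero _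
  · intro a _ _; exact colorSwap_ne k a
  · intro a ha
    show colorSwap k a ∈ S
    rw [← hS]
    exact Finset.mem_image_of_mem _ ha
  · intro a _; exact colorSwap_invol k a

end aux

theorem cphi_even_odd (k : ℕ) (hk : 0 < k) (n : ℕ) :
    2 ∣ genFrobCPhi (2 * k) (2 * n + 1) := by
  classical
  have : NeZero k := ⟨hk.ne'⟩
  set N := 2 * n + 1 with hN
  set A : Set (Finset (ℕ × Fin (2 * k)) × Finset (ℕ × Fin (2 * k))) :=
    {ST | ST.1.card = ST.2.card ∧
      N = ST.1.card + (∑ x ∈ ST.1, x.1) + (∑ x ∈ ST.2, x.1)} with hA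
  -- finiteness
  have hbound : ∀ ST ∈ A, ST.1 ⊆ Finset.range (N + 1) ×ˢ Finset.univ ∧
      ST.2 ⊆ Finset.range (N + 1) ×ˢ Finset.univ := by
    rintro ⟨S, T⟩ ⟨_, hsum⟩
    dsimp only at hsum
    constructor
    · intro x hx
      simp only [Finset.mem_product, Finset.mem_range, Finset.mem_univ, and_true]
      have : x.1 ≤ ∑ y ∈ S, y.1 := Finset.single_le_sum (fun _ _ => Nat.zero_le _) hx
      omega
    · intro x hx
      simp only [Finset.mem_product, Finset.mem_range, Finset.mem_univ, and_true]
      have : x.1 ≤ ∑ y ∈ T, y.1 := Finset.single_le_sum (fun _ _ => Nat.zero_le _) hx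
      omega
  have hfin : A.Finite := by
    apply Set.Finite.subset (Set.finite_coe_iff.mp ?_)
      (s := ↑(((Finset.range (N + 1) ×ˢ (Finset.univ : Finset (Fin (2 * k)))).powerset) ×ˢ
        ((Finset.range (N + 1) ×ˢ (Finset.univ : Finset (Fin (2 * k)))).powerset)))
    · rintro ST hST
      simp only [Finset.coe_product, Set.mem_prod, Finset.mem_coe, Finset.mem_powerset]
      exact ⟨(hbound ST hST).1, (hbound ST hST).2⟩
    · exact Set.finite_coe_iff.mpr (Finset.finite_toSet _)
  rw [genFrobCPhi, ← hA, Set.ncard_eq_toFinset_card A hfin]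
  set F := hfin.toFinset with hF
  -- the color-swap involution on pairs
  set Φ : Finset (ℕ × Fin (2 * k)) × Finset (ℕ × Fin (2 * k)) →
      Finset (ℕ × Fin (2 * k)) × Finset (ℕ × Fin (2 * k)) :=
    fun ST => (ST.1.image (colorSwap k), ST.2.image (colorSwap k)) with hΦ
  have hΦinvol : ∀ ST, Φ (Φ ST) = ST := by
    intro ST
    simp only [hΦ, Finset.image_image]
    have h1 : ∀ (S : Finset (ℕ × Fin (2 * k))),
        S.image (colorSwap k ∘ colorSwap k) = S := by
      intro S
      have : colorSwap k ∘ colorSwap k = id := funext (colorSwap_invol k)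
      rw [this, Finset.image_id]
    rw [h1, h1]
  have hΦsum : ∀ (S : Finset (ℕ × Fin (2 * k))),
      ∑ x ∈ S.image (colorSwap k), x.1 = ∑ x ∈ S, x.1 := by
    intro S
    rw [Finset.sum_image (fun a _ b _ h => colorSwap_inj k h)]
    rfl
  have hΦmem : ∀ ST ∈ F, Φ ST ∈ F := by
    intro ST hST
    rw [hF, Set.Finite.mem_toFinset] at hST ⊢
    obtain ⟨hc, hs⟩ := hST
    refine ⟨?_, ?_⟩
    · simp only [hΦ, Finset.card_image_of_injective _ (colorSwap_inj k)]
      exact hc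
    · simp only [hΦ, Finset.card_image_of_injective _ (colorSwap_inj k), hΦsum]
      exact hs
  have hΦne : ∀ ST ∈ F, Φ ST ≠ ST := by
    intro ST hST heq
    rw [hF, Set.Finite.mem_toFinset] at hST
    obtain ⟨hc, hs⟩ := hST
    have h1 : ST.1.image (colorSwap k) = ST.1 := congrArg Prod.fst heq
    have h2 : ST.2.image (colorSwap k) = ST.2 := congrArg Prod.snd heq
    have hcast := congrArg (Nat.cast : ℕ → ZMod 2) hs
    push_cast at hcast
    have e1 : ∑ x ∈ ST.1, ((x.1 : ZMod 2)) = 0 :=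
      sum_invariant_zero k ST.1 h1 (fun v => (v : ZMod 2))
    have e2 : ∑ x ∈ ST.2, ((x.1 : ZMod 2)) = 0 :=
      sum_invariant_zero k ST.2 h2 (fun v => (v : ZMod 2))
    have e3 : ((ST.1.card : ZMod 2)) = 0 := by
      rw [Finset.card_eq_sum_ones, Nat.cast_sum]
      simpa using sum_invariant_zero k ST.1 h1 (fun _ => (1 : ZMod 2))
    rw [e1, e2, e3] at hcast
    rw [hN] at hcast; push_cast at hcast
    rw [show ((2 : ZMod 2)) = 0 by decide] at hcast
    simp at hcast
  -- conclude evenness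
  have hzero : ((F.card : ZMod 2)) = 0 := by
    rw [Finset.card_eq_sum_ones, Nat.cast_sum]
    refine Finset.sum_involution (fun ST _ => Φ ST) ?_ ?_ ?_ ?_
    · intro a _; push_cast; decide
    · intro a ha _; exact hΦne a ha
    · intro a ha; exact hΦmem a ha
    · intro a _; exact hΦinvol a
  have := (ZMod.natCast_eq_zero_iff F.card 2).mp hzero
  exact this
end
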